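/- arXiv:2203.06496 — 6 statements merged into one kernel-verified Lean document; each statement's English description precedes it below -/
import Mathlib

section
/- Let M be a positive integer and A a random variable taking values in [0,1] such that P(A ≤ α) ≤ α + δ for all α ∈ (0,1), for some constant δ ≥ 0. Let B be a random variable such that conditional on A, B follows a Binomial(M, A) distribution, and set R = (1+B)/(1+M). Then P(R ≤ α) ≤ α + δ for all α ∈ (0,1). -/
open MeasureTheory


lemma cont1' (i j : ℕ) : Continuous (fun t : ℝ => t ^ i * (1 - t) ^ j) :=
  (continuous_pow i).mul ((continuous_const.sub continuous_id).pow j)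

lemma ident (M : ℕ) : ∀ m, m ≤ M → ∀ a : ℝ,
    ∑ k ∈ Finset.range m, (M.choose k : ℝ) * a ^ k * (1 - a) ^ (M - k)
      = (M.choose m * m : ℝ) * ∫ t in a..(1:ℝ), t ^ (m - 1) * (1 - t) ^ (M - m) := by
  intro m
  induction m with
  | zero => intro _ a; simp
  | succ m ih =>
    intro hm a
    have hmM : m < M := hm
    have hc : ((M.choose (m+1) : ℝ) * ((m:ℝ)+1)) = (M.choose m : ℝ) * ((M - m : ℕ) : ℝ) := by
      exact_mod_cast congrArg (Nat.cast (R := ℝ)) (Nat.choose_succ_right_eq M m)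
    have hexp : M - m - 1 = M - (m+1) := by omega
    have hder : ∀ t : ℝ, HasDerivAt
        (fun t : ℝ => -((M.choose m : ℝ) * (t ^ m * (1 - t) ^ (M - m))))
        ((M.choose (m+1) * (m+1) : ℝ) * (t ^ m * (1 - t) ^ (M - (m+1)))
          - (M.choose m * m : ℝ) * (t ^ (m-1) * (1 - t) ^ (M - m))) t := by
      intro t
      have h1 : HasDerivAt (fun t : ℝ => t ^ m) ((m : ℝ) * t ^ (m-1)) t := hasDerivAt_pow m t
      have h2 : HasDerivAt (fun t : ℝ => (1 - t) ^ (M - m))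
          (((M - m : ℕ) : ℝ) * (1 - t) ^ (M - m - 1) * (-1)) t :=
        ((hasDerivAt_id t).const_sub 1).pow (M - m)
      have h3 := ((h1.mul h2).const_mul (-(M.choose m : ℝ)))
      refine (h3.congr_deriv ?_).congr_of_eventuallyEq
        (Filter.Eventually.of_forall fun y => by simp only [Pi.mul_apply]; ring)
      rw [hexp]
      linear_combination (-(t ^ m * (1 - t) ^ (M - (m+1)))) * hc
    have hcont : Continuous (fun t : ℝ => (M.choose (m+1) * (m+1) : ℝ) * (t ^ m * (1 - t) ^ (M - (m+1)))
          - (M.choose m * m : ℝ) * (t ^ (m-1) * (1 - t) ^ (M - m))) :=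
      (continuous_const.mul (cont1' m (M-(m+1)))).sub (continuous_const.mul (cont1' (m-1) (M-m)))
    have hint := intervalIntegral.integral_eq_sub_of_hasDerivAt (a := a) (b := 1)
      (fun t _ => hder t) (hcont.intervalIntegrable a 1)
    have hzero : ((1:ℝ) - 1) ^ (M - m) = 0 := by
      rw [sub_self]; exact zero_pow (by omega)
    rw [hzero] at hint
    have hsplit : (∫ t in a..(1:ℝ),
        ((M.choose (m+1) * (m+1) : ℝ) * (t ^ m * (1 - t) ^ (M - (m+1)))
          - (M.choose m * m : ℝ) * (t ^ (m-1) * (1 - t) ^ (M - m))))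
        = (M.choose (m+1) * (m+1) : ℝ) * (∫ t in a..(1:ℝ), t ^ m * (1 - t) ^ (M - (m+1)))
          - (M.choose m * m : ℝ) * (∫ t in a..(1:ℝ), t ^ (m-1) * (1 - t) ^ (M - m)) := by
      rw [intervalIntegral.integral_sub
          (f := fun t => (M.choose (m+1) * (m+1) : ℝ) * (t ^ m * (1 - t) ^ (M - (m+1))))
          (g := fun t => (M.choose m * m : ℝ) * (t ^ (m-1) * (1 - t) ^ (M - m)))
          (((continuous_const.mul (cont1' m (M-(m+1))))).intervalIntegrable a 1)
          (((continuous_const.mul (cont1' (m-1) (M-m)))).intervalIntegrable a 1),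
        intervalIntegral.integral_const_mul, intervalIntegral.integral_const_mul]
    rw [Finset.sum_range_succ, ih hmM.le a]
    rw [hsplit] at hint
    simp only [Nat.add_sub_cancel]
    push_cast
    linear_combination -hint

/-- sum at a = 0 equals 1 -/
lemma sum_at_zero (M m : ℕ) (hm : 0 < m) :
    ∑ k ∈ Finset.range m, (M.choose k : ℝ) * (0:ℝ) ^ k * (1 - 0) ^ (M - k) = 1 := by
  rw [Finset.sum_eq_single 0]
  · simp
  · intro k _ hk; simp [zero_pow hk]
  · intro h; exact absurd (Finset.mem_range.mpr hm) h


/-- Lemma A1: If `P(A ≤ α) ≤ α + δ` for all `α ∈ (0,1)` and, conditionally on `A`,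
`B ~ Binomial(M, A)`, then `R = (1+B)/(1+M)` satisfies `P(R ≤ α) ≤ α + δ`. -/
theorem stmt0 {Ω : Type*} [MeasurableSpace Ω] (μ : Measure Ω) [IsProbabilityMeasure μ]
    (M : ℕ) (hM : 0 < M) (A : Ω → ℝ) (B : Ω → ℕ) (δ : ℝ) (hδ : 0 ≤ δ)
    (hA01 : ∀ ω, A ω ∈ Set.Icc (0:ℝ) 1)
    (hAmeas : Measurable A) (hBmeas : Measurable B)
    (hAsub : ∀ α : ℝ, α ∈ Set.Ioo (0:ℝ) 1 → (μ {ω | A ω ≤ α}).toReal ≤ α + δ)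
    (hcond : ∀ k : ℕ, ∀ s : Set Ω, MeasurableSet[MeasurableSpace.comap A inferInstance] s →
      (μ ({ω | B ω = k} ∩ s)).toReal
        = ∫ ω in s, (M.choose k : ℝ) * A ω ^ k * (1 - A ω) ^ (M - k) ∂μ) :
    ∀ α : ℝ, α ∈ Set.Ioo (0:ℝ) 1 →
      (μ {ω | ((1 : ℝ) + B ω) / (1 + M) ≤ α}).toReal ≤ α + δ := by
  intro α hα
  obtain ⟨hα0, hα1⟩ := hα
  have hM1 : (0:ℝ) < 1 + M := by positivity
  set m : ℕ := ⌊α * (1 + M)⌋₊ with hmdef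
  have hmle : (m : ℝ) ≤ α * (1 + M) := Nat.floor_le (by positivity)
  have hset : {ω | ((1 : ℝ) + B ω) / (1 + M) ≤ α} = {ω | B ω < m} := by
    ext ω
    simp only [Set.mem_setOf_eq]
    rw [div_le_iff₀ hM1, Nat.lt_iff_add_one_le, hmdef, Nat.le_floor_iff (by positivity)]
    push_cast
    constructor <;> intro h <;> linarith
  rw [hset]
  rcases Nat.eq_zero_or_pos m with h0 | hmpos
  · rw [h0]
    have : {ω | B ω < 0} = (∅ : Set Ω) := by ext ω; simp
    rw [this]
    simp only [measure_empty, ENNReal.toReal_zero]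
    positivity
  have hmM : m ≤ M := by
    have : m < M + 1 := by
      rw [hmdef]
      apply (Nat.floor_lt (by positivity)).mpr
      push_cast
      nlinarith
    omega
  -- Step A: decompose the event
  have hmeasBk : ∀ k : ℕ, MeasurableSet {ω | B ω = k} :=
    fun k => hBmeas (measurableSet_singleton k)
  have hAreal : (μ {ω | B ω < m}).toReal = ∑ k ∈ Finset.range m, (μ {ω | B ω = k}).toReal := by
    have hBsets : {ω | B ω < m} = ⋃ k ∈ Finset.range m, {ω | B ω = k} := by
      ext ω; simp
    rw [hBsets, measure_biUnion_finset ?_ (fun k _ => hmeasBk k),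
      ENNReal.toReal_sum (fun k _ => measure_ne_top μ _)]
    intro i _ j _ hij
    simp only [Function.onFun, Set.disjoint_left]
    intro ω hi hj
    exact hij (hi.symm.trans hj)
  -- Step B: each piece as an integral
  have hBk : ∀ k, (μ {ω | B ω = k}).toReal
      = ∫ ω, (M.choose k : ℝ) * A ω ^ k * (1 - A ω) ^ (M - k) ∂μ := by
    intro k
    have := hcond k Set.univ MeasurableSet.univ
    rwa [Set.inter_univ, setIntegral_univ] at this
  -- integrability of each term
  have hintg : ∀ k : ℕ, Integrable (fun ω => (M.choose k : ℝ) * A ω ^ k * (1 - A ω) ^ (M - k)) μ := by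
    intro k
    refine Integrable.mono' (integrable_const ((M.choose k : ℝ)))
      ((measurable_const.mul (hAmeas.pow_const k)).mul
        ((measurable_const.sub hAmeas).pow_const _)).aestronglyMeasurable
      (Filter.Eventually.of_forall fun ω => ?_)
    obtain ⟨h0, h1⟩ := hA01 ω
    have e1 : A ω ^ k ≤ 1 := pow_le_one₀ h0 h1
    have e2 : (1 - A ω) ^ (M - k) ≤ 1 := pow_le_one₀ (by linarith) (by linarith)
    have p1 : 0 ≤ A ω ^ k := pow_nonneg h0 k
    have p2 : (0:ℝ) ≤ (1 - A ω) ^ (M - k) := pow_nonneg (by linarith) _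
    rw [Real.norm_eq_abs, abs_of_nonneg (by positivity)]
    have hC : (0:ℝ) ≤ (M.choose k : ℝ) := Nat.cast_nonneg _
    have : (M.choose k:ℝ) * A ω ^ k * (1 - A ω)^(M-k) ≤ (M.choose k:ℝ) * 1 * 1 :=
      mul_le_mul (mul_le_mul le_rfl e1 p1 hC) e2 p2 (by positivity)
    linarith
  -- Step C
  have hsum : (μ {ω | B ω < m}).toReal
      = ∫ ω, ∑ k ∈ Finset.range m, (M.choose k : ℝ) * A ω ^ k * (1 - A ω) ^ (M - k) ∂μ := by
    rw [hAreal, integral_finset_sum _ (fun k _ => hintg k)]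
    exact Finset.sum_congr rfl (fun k _ => hBk k)
  set g : ℝ → ℝ := fun t => t ^ (m-1) * (1 - t) ^ (M - m) with hgdef
  have gmeas : Measurable g := (cont1' (m-1) (M-m)).measurable
  have gbound : ∀ t ∈ Set.Ioc (0:ℝ) 1, 0 ≤ g t ∧ g t ≤ 1 := by
    intro t ht
    obtain ⟨ht0, ht1⟩ := ht
    constructor
    · apply mul_nonneg (pow_nonneg ht0.le _) (pow_nonneg (by linarith) _)
    · calc g t ≤ 1 * 1 := by
            apply mul_le_mul (pow_le_one₀ ht0.le ht1) (pow_le_one₀ (by linarith) (by linarith))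
              (pow_nonneg (by linarith) _) zero_le_one
        _ = 1 := by ring
  set c : ℝ := (M.choose m * m : ℝ) with hcdef
  have hcnn : 0 ≤ c := by positivity
  set F : Ω → ℝ → ℝ := fun ω t => (Set.Ioc (0:ℝ) 1 ∩ Set.Ici (A ω)).indicator g t with hFdef
  -- pointwise identity
  have hptwise : ∀ ω, ∑ k ∈ Finset.range m, (M.choose k : ℝ) * A ω ^ k * (1 - A ω) ^ (M - k)
      = c * ∫ t, F ω t := by
    intro ω
    obtain ⟨h0, h1⟩ := hA01 ω
    rw [ident M m hmM (A ω)]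
    congr 1
    rw [intervalIntegral.integral_of_le h1, hFdef,
      integral_indicator ((measurableSet_Ioc.inter measurableSet_Ici))]
    refine (setIntegral_congr_set ?_).symm
    rw [MeasureTheory.ae_eq_set]
    constructor
    · refine measure_mono_null ?_ (measure_singleton (A ω))
      intro x hx
      simp only [Set.mem_diff, Set.mem_inter_iff, Set.mem_Ioc, Set.mem_Ici,
        Set.mem_singleton_iff] at *
      rcases hx with ⟨⟨⟨hx1, hx2⟩, hx3⟩, hx4⟩
      by_contra hne
      exact hx4 ⟨lt_of_le_of_ne hx3 (Ne.symm hne), hx2⟩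
    · have : Set.Ioc (A ω) 1 \ (Set.Ioc 0 1 ∩ Set.Ici (A ω)) = ∅ := by
        ext x
        simp only [Set.mem_diff, Set.mem_inter_iff, Set.mem_Ioc, Set.mem_Ici,
          Set.mem_empty_iff_false, iff_false]
        rintro ⟨⟨hx1, hx2⟩, h⟩
        exact h ⟨⟨lt_of_le_of_lt h0 hx1, hx2⟩, hx1.le⟩
      rw [this]; simp
  -- measurability of uncurry F
  have hSmeas : MeasurableSet {p : Ω × ℝ | p.2 ∈ Set.Ioc (0:ℝ) 1 ∧ A p.1 ≤ p.2} :=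
    (measurable_snd measurableSet_Ioc).inter
      (measurableSet_le (hAmeas.comp measurable_fst) measurable_snd)
  have hFmeas : Measurable (Function.uncurry F) := by
    have : Function.uncurry F
        = Set.indicator {p : Ω × ℝ | p.2 ∈ Set.Ioc (0:ℝ) 1 ∧ A p.1 ≤ p.2} (fun p => g p.2) := by
      funext p
      simp only [Function.uncurry, hFdef, Set.indicator_apply, Set.mem_inter_iff, Set.mem_Ioc,
        Set.mem_Ici, Set.mem_setOf_eq]
    rw [this]
    exact (gmeas.comp measurable_snd).indicator hSmeas
  -- integrability of uncurry F
  have hFint : Integrable (Function.uncurry F) (μ.prod volume) := by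
    refine Integrable.mono' (g := (Set.univ ×ˢ Set.Ioc (0:ℝ) 1).indicator (fun _ => (1:ℝ)))
      ?_ hFmeas.aestronglyMeasurable (Filter.Eventually.of_forall fun p => ?_)
    · rw [integrable_indicator_iff (MeasurableSet.univ.prod measurableSet_Ioc)]
      refine (integrableOn_const_iff (C := (1:ℝ))).mpr (Or.inr ?_)
      rw [Measure.prod_prod]
      simp only [measure_univ, one_mul, Real.volume_Ioc]
      norm_num
    · by_cases hp : p.2 ∈ Set.Ioc (0:ℝ) 1
      · have hrhs : (Set.univ ×ˢ Set.Ioc (0:ℝ) 1).indicator (fun _ => (1:ℝ)) p = 1 := by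
          apply Set.indicator_of_mem
          exact ⟨Set.mem_univ _, hp⟩
        have hFp : Function.uncurry F p = (Set.Ioc (0:ℝ) 1 ∩ Set.Ici (A p.1)).indicator g p.2 := rfl
        rw [hrhs, Real.norm_eq_abs, hFp]
        by_cases hmem : p.2 ∈ Set.Ioc (0:ℝ) 1 ∩ Set.Ici (A p.1)
        · rw [Set.indicator_of_mem hmem]
          obtain ⟨hg0, hg1⟩ := gbound p.2 hp
          rw [abs_of_nonneg hg0]; exact hg1
        · rw [Set.indicator_of_notMem hmem]; simp
      · have hlhs : Function.uncurry F p = 0 := by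
          have hFp : Function.uncurry F p = (Set.Ioc (0:ℝ) 1 ∩ Set.Ici (A p.1)).indicator g p.2 := rfl
          rw [hFp]
          exact Set.indicator_of_notMem (fun hmem => hp hmem.1) _
        rw [hlhs]
        simp only [norm_zero]
        exact Set.indicator_apply_nonneg (fun _ => zero_le_one)
  have hswap := MeasureTheory.integral_integral_swap (f := F) hFint
  -- inner integral after swap
  have hinner : ∀ t : ℝ, ∫ ω, F ω t ∂μ
      = (Set.Ioc (0:ℝ) 1).indicator (fun t => (μ {ω | A ω ≤ t}).toReal * g t) t := by
    intro t
    by_cases ht : t ∈ Set.Ioc (0:ℝ) 1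
    · have hsm : MeasurableSet {ω | A ω ≤ t} := hAmeas measurableSet_Iic
      have heq : ∀ ω, F ω t = ({ω | A ω ≤ t}).indicator (fun _ => g t) ω := by
        intro ω
        simp only [hFdef, Set.indicator_apply, Set.mem_inter_iff, Set.mem_Ioc, Set.mem_Ici,
          Set.mem_setOf_eq, ht.1, ht.2, true_and]
      calc ∫ ω, F ω t ∂μ = ∫ ω, ({ω | A ω ≤ t}).indicator (fun _ => g t) ω ∂μ :=
            integral_congr_ae (Filter.Eventually.of_forall heq)
        _ = (μ {ω | A ω ≤ t}).toReal * g t := by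
            rw [integral_indicator hsm, setIntegral_const, smul_eq_mul]; rfl
        _ = (Set.Ioc (0:ℝ) 1).indicator (fun t => (μ {ω | A ω ≤ t}).toReal * g t) t := by
            rw [Set.indicator_of_mem ht]
    · have heq : ∀ ω, F ω t = (0:ℝ) := fun ω =>
        Set.indicator_of_notMem (fun hmem => ht hmem.1) _
      calc ∫ ω, F ω t ∂μ = ∫ _ω, (0:ℝ) ∂μ :=
            integral_congr_ae (Filter.Eventually.of_forall heq)
        _ = 0 := integral_zero _ _
        _ = (Set.Ioc (0:ℝ) 1).indicator (fun t => (μ {ω | A ω ≤ t}).toReal * g t) t :=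
            (Set.indicator_of_notMem ht _).symm
  -- monotone distribution function is measurable
  have hmono : Monotone (fun t : ℝ => (μ {ω | A ω ≤ t}).toReal) := by
    intro s t hst
    exact ENNReal.toReal_mono (measure_ne_top μ _) (measure_mono (fun ω h => le_trans h hst))
  -- the comparison step
  have hcomp : ∫ t in Set.Ioc (0:ℝ) 1, (μ {ω | A ω ≤ t}).toReal * g t
      ≤ ∫ t in Set.Ioc (0:ℝ) 1, (t + δ) * g t := by
    refine setIntegral_mono_on ?_ ?_ measurableSet_Ioc ?_
    · refine Integrable.mono' (g := fun _ => (1:ℝ)) ((integrableOn_const_iff (C := (1:ℝ))).mpr (Or.inr (by simp)))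
        ((hmono.measurable.mul gmeas).aestronglyMeasurable)
        ?_
      filter_upwards [ae_restrict_mem measurableSet_Ioc] with t ht
      obtain ⟨hg0, hg1⟩ := gbound t ht
      have hμ1 : (μ {ω | A ω ≤ t}).toReal ≤ 1 := by
        rw [← ENNReal.toReal_one]
        exact ENNReal.toReal_mono (by simp) prob_le_one
      rw [Real.norm_eq_abs, abs_of_nonneg (mul_nonneg ENNReal.toReal_nonneg hg0)]
      nlinarith [ENNReal.toReal_nonneg (a := μ {ω | A ω ≤ t})]
    · exact (((continuous_id.add continuous_const).mul (cont1' (m-1) (M-m))).integrableOn_Ioc)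
    · intro t ht
      obtain ⟨hg0, hg1⟩ := gbound t ht
      refine mul_le_mul_of_nonneg_right ?_ hg0
      rcases eq_or_lt_of_le ht.2 with h1 | h1
      · have : (μ {ω | A ω ≤ t}).toReal ≤ 1 := by
          rw [← ENNReal.toReal_one]
          exact ENNReal.toReal_mono (by simp) prob_le_one
        rw [h1] at *
        linarith
      · exact hAsub t ⟨ht.1, h1⟩
  -- final integral computations
  have hI1 : c * ∫ t in (0:ℝ)..1, g t = 1 := by
    rw [← ident M m hmM 0, sum_at_zero M m hmpos]
  have hI2 : c * ∫ t in (0:ℝ)..1, t ^ m * (1 - t) ^ (M - m) = (m : ℝ) / (1 + M) := by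
    have h2 := ident (M+1) (m+1) (by omega) 0
    rw [sum_at_zero (M+1) (m+1) (by omega)] at h2
    simp only [Nat.add_sub_cancel] at h2
    have hMm : M + 1 - (m+1) = M - m := by omega
    rw [hMm] at h2
    push_cast at h2
    have hnatR : ((M:ℝ)+1) * (M.choose m : ℝ) = ((M+1).choose (m+1) : ℝ) * ((m:ℝ)+1) := by
      exact_mod_cast congrArg (Nat.cast (R := ℝ)) (Nat.add_one_mul_choose_eq M m)
    rw [hcdef, eq_div_iff (ne_of_gt hM1)]
    push_cast
    linear_combination (∫ t in (0:ℝ)..1, t ^ m * (1 - t) ^ (M - m)) * (m:ℝ) * hnatR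
      + (m:ℝ) * h2.symm
  have hI3 : c * ∫ t in (0:ℝ)..1, (t + δ) * g t = (m : ℝ) / (1 + M) + δ := by
    have heq : ∀ t : ℝ, (t + δ) * g t = t ^ m * (1 - t) ^ (M - m) + δ * g t := by
      intro t
      have ht' : t * t ^ (m-1) = t ^ m := by
        rw [← pow_succ']
        congr 1
        omega
      simp only [hgdef]
      linear_combination ((1-t)^(M-m)) * ht' 
    rw [intervalIntegral.integral_congr (fun t _ => heq t)]
    rw [intervalIntegral.integral_add (f := fun t => t ^ m * (1 - t) ^ (M - m)) (g := fun t => δ * g t) ((cont1' m (M-m)).intervalIntegrable 0 1)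
      ((continuous_const.mul (cont1' (m-1) (M-m))).intervalIntegrable 0 1),
      intervalIntegral.integral_const_mul]
    rw [mul_add, hI2]
    have : c * (δ * ∫ t in (0:ℝ)..1, g t) = δ * (c * ∫ t in (0:ℝ)..1, g t) := by ring
    rw [this, hI1, mul_one]
  -- put everything together
  have key : (μ {ω | B ω < m}).toReal = c * ∫ t in Set.Ioc (0:ℝ) 1, (μ {ω | A ω ≤ t}).toReal * g t := by
    rw [hsum]
    calc ∫ ω, ∑ k ∈ Finset.range m, (M.choose k : ℝ) * A ω ^ k * (1 - A ω) ^ (M - k) ∂μ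
        = ∫ ω, c * (∫ t, F ω t) ∂μ := by
          exact integral_congr_ae (Filter.Eventually.of_forall hptwise)
      _ = c * ∫ ω, (∫ t, F ω t) ∂μ := integral_const_mul c _
      _ = c * ∫ t, (∫ ω, F ω t ∂μ) := by rw [hswap]
      _ = c * ∫ t, (Set.Ioc (0:ℝ) 1).indicator (fun t => (μ {ω | A ω ≤ t}).toReal * g t) t := by
          congr 1
          exact integral_congr_ae (Filter.Eventually.of_forall hinner)
      _ = c * ∫ t in Set.Ioc (0:ℝ) 1, (μ {ω | A ω ≤ t}).toReal * g t := by
          rw [integral_indicator measurableSet_Ioc]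
  have hstep : c * ∫ t in Set.Ioc (0:ℝ) 1, (μ {ω | A ω ≤ t}).toReal * g t
      ≤ c * ∫ t in Set.Ioc (0:ℝ) 1, (t + δ) * g t :=
    mul_le_mul_of_nonneg_left hcomp hcnn
  have hIoc : ∫ t in Set.Ioc (0:ℝ) 1, (t + δ) * g t = ∫ t in (0:ℝ)..1, (t + δ) * g t :=
    (intervalIntegral.integral_of_le zero_le_one).symm
  have hfinal : c * ∫ t in Set.Ioc (0:ℝ) 1, (t + δ) * g t = (m : ℝ) / (1 + M) + δ := by
    rw [hIoc]; exact hI3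
  have hlast : (m : ℝ) / (1 + M) ≤ α := by
    rw [div_le_iff₀ hM1]
    linarith
  calc (μ {ω | B ω < m}).toReal
      = c * ∫ t in Set.Ioc (0:ℝ) 1, (μ {ω | A ω ≤ t}).toReal * g t := key
    _ ≤ c * ∫ t in Set.Ioc (0:ℝ) 1, (t + δ) * g t := hstep
    _ = (m : ℝ) / (1 + M) + δ := hfinal
    _ ≤ α + δ := by linarith
end

section
/- Let Y be a {0,1}-valued random variable and S, Z random variables such that S ⊥ Z | Y, and suppose there exists a ∈ ℝ with P(S ≤ a | Y = 1) ≠ P(S ≤ a | Y = 0). Then P(Y = 1 | Z) = (P(S ≤ a | Z) − P(S ≤ a | Y = 0)) / (P(S ≤ a | Y = 1) − P(S ≤ a | Y = 0)) almost surely. -/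
open MeasureTheory ProbabilityTheory

private lemma intIndic {Ω : Type*} [MeasurableSpace Ω] (μ : Measure Ω) [IsFiniteMeasure μ]
    {A : Set Ω} (hA : MeasurableSet A) (c : ℝ) (s : Set Ω) :
    ∫ x in s, A.indicator (fun _ => c) x ∂μ = c * (μ (A ∩ s)).toReal := by
  rw [MeasureTheory.integral_indicator hA, setIntegral_const, measureReal_def, Measure.restrict_apply hA]
  rw [smul_eq_mul, mul_comm]

private lemma splitY {Ω : Type*} [MeasurableSpace Ω] (μ : Measure Ω) [IsFiniteMeasure μ]
    {Y : Ω → ℝ} (hY : Measurable Y) (hY01 : ∀ ω, Y ω = 0 ∨ Y ω = 1) (E : Set Ω) :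
    (μ E).toReal = (μ (E ∩ {ω | Y ω = 1})).toReal + (μ (E ∩ {ω | Y ω = 0})).toReal := by
  have hT1 : MeasurableSet {ω | Y ω = 1} := hY (measurableSet_eq (a := (1 : ℝ)))
  have hdiff : E \ {ω | Y ω = 1} = E ∩ {ω | Y ω = 0} := by
    ext ω
    simp only [Set.mem_diff, Set.mem_inter_iff, Set.mem_setOf_eq]
    rcases hY01 ω with h | h <;> simp [h]
  have := measure_inter_add_diff (μ := μ) E hT1
  rw [hdiff] at this
  rw [← this, ENNReal.toReal_add (measure_ne_top _ _) (measure_ne_top _ _)]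

private lemma condexpY {Ω : Type*} [MeasurableSpace Ω]
    (μ : Measure Ω) [IsProbabilityMeasure μ]
    {Y : Ω → ℝ} (hY : Measurable Y) (hY01 : ∀ ω, Y ω = 0 ∨ Y ω = 1)
    (h1 : 0 < μ {ω | Y ω = 1}) (h0 : 0 < μ {ω | Y ω = 0})
    {A : Set Ω} (hA : MeasurableSet A) :
    μ[A.indicator (fun _ => (1:ℝ)) | MeasurableSpace.comap Y inferInstance]
      =ᵐ[μ] fun ω => if Y ω = 1
        then (μ (A ∩ {ω | Y ω = 1})).toReal / (μ {ω | Y ω = 1}).toReal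
        else (μ (A ∩ {ω | Y ω = 0})).toReal / (μ {ω | Y ω = 0}).toReal := by
  set T1 : Set Ω := {ω | Y ω = 1} with hT1def
  set T0 : Set Ω := {ω | Y ω = 0} with hT0def
  set c1 : ℝ := (μ (A ∩ T1)).toReal / (μ T1).toReal with hc1def
  set c0 : ℝ := (μ (A ∩ T0)).toReal / (μ T0).toReal with hc0def
  have hT1m : MeasurableSet T1 := hY (measurableSet_eq (a := (1 : ℝ)))
  have hT0m : MeasurableSet T0 := hY (measurableSet_eq (a := (0 : ℝ)))
  have hp1 : (μ T1).toReal ≠ 0 := (ENNReal.toReal_pos h1.ne' (measure_ne_top _ _)).ne'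
  have hp0 : (μ T0).toReal ≠ 0 := (ENNReal.toReal_pos h0.ne' (measure_ne_top _ _)).ne'
  have e1 : c1 * (μ T1).toReal = (μ (A ∩ T1)).toReal := div_mul_cancel₀ _ hp1
  have e0 : c0 * (μ T0).toReal = (μ (A ∩ T0)).toReal := div_mul_cancel₀ _ hp0
  have hg_eq' : (fun ω => if Y ω = 1 then c1 else c0)
      = fun ω => T1.indicator (fun _ => c1 - c0) ω + c0 := by
    funext ω
    by_cases h : Y ω = 1 <;> simp [Set.indicator_apply, hT1def, Set.mem_setOf_eq, h]
  refine (ae_eq_condExp_of_forall_setIntegral_eq hY.comap_le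
    ((integrable_const (1:ℝ)).indicator hA) (fun s _ _ => ?_) (fun s hs _ => ?_) ?_).symm
  · rw [hg_eq']
    exact (((integrable_const _).indicator hT1m).add (integrable_const _)).integrableOn
  · obtain ⟨C, hC, rfl⟩ := hs
    rw [hg_eq', integral_add (((integrable_const _).indicator hT1m).integrableOn.integrable)
      (integrable_const _).integrableOn.integrable, intIndic μ hT1m, setIntegral_const, measureReal_def,
      intIndic μ hA]
    by_cases hC1 : (1:ℝ) ∈ C <;> by_cases hC0 : (0:ℝ) ∈ C
    · have hs : Y ⁻¹' C = Set.univ := by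
        ext ω
        simp only [Set.mem_preimage, Set.mem_univ, iff_true]
        rcases hY01 ω with h | h <;> simp [h, hC0, hC1]
      have hsum : (1:ℝ) = (μ T1).toReal + (μ T0).toReal := by
        have := splitY μ hY hY01 Set.univ
        simpa using this
      rw [hs]
      have hsplitA := splitY μ hY hY01 A
      simp only [Set.inter_univ, measure_univ, ENNReal.toReal_one, smul_eq_mul]
      rw [hsplitA]
      linear_combination e1 + e0 + c0 * hsum
    · have hs : Y ⁻¹' C = T1 := by
        ext ω
        simp only [Set.mem_preimage, hT1def, Set.mem_setOf_eq]
        rcases hY01 ω with h | h <;> simp [h, hC0, hC1]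
      rw [hs]
      simp only [Set.inter_self, smul_eq_mul]
      linear_combination e1
    · have hs : Y ⁻¹' C = T0 := by
        ext ω
        simp only [Set.mem_preimage, hT0def, Set.mem_setOf_eq]
        rcases hY01 ω with h | h <;> simp [h, hC0, hC1]
      have h10 : T1 ∩ T0 = ∅ := by
        ext ω; simp only [Set.mem_inter_iff, Set.mem_empty_iff_false, iff_false, hT1def,
          hT0def, Set.mem_setOf_eq]
        rintro ⟨ha, hb⟩; exact one_ne_zero (ha.symm.trans hb)
      rw [hs, h10]
      simp only [measure_empty, ENNReal.toReal_zero, mul_zero, zero_add, smul_eq_mul]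
      linear_combination e0
    · have hs : Y ⁻¹' C = ∅ := by
        ext ω
        simp only [Set.mem_preimage, Set.mem_empty_iff_false, iff_false]
        rcases hY01 ω with h | h <;> simp [h, hC0, hC1]
      rw [hs]
      simp
  · refine StronglyMeasurable.aestronglyMeasurable ?_
    have hφ : Measurable (fun y : ℝ => if y = 1 then c1 else c0) :=
      Measurable.ite measurableSet_eq measurable_const measurable_const
    exact (hφ.comp (Measurable.of_comap_le le_rfl)).stronglyMeasurable

private lemma keyB {Ω γ : Type*} [MeasurableSpace Ω] [StandardBorelSpace Ω]
    [MeasurableSpace γ]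
    (μ : Measure Ω) [IsProbabilityMeasure μ]
    {Y S : Ω → ℝ} {Z : Ω → γ} (hY : Measurable Y) (hS : Measurable S) (hZ : Measurable Z)
    (hY01 : ∀ ω, Y ω = 0 ∨ Y ω = 1)
    (h1 : 0 < μ {ω | Y ω = 1}) (h0 : 0 < μ {ω | Y ω = 0})
    (hCI : CondIndepFun (MeasurableSpace.comap Y inferInstance) hY.comap_le S Z μ)
    {u : Set ℝ} (hu : MeasurableSet u) {t : Set γ} (ht : MeasurableSet t)
    (i : ℝ) (hi : i = 0 ∨ i = 1) (hμi : 0 < μ {ω | Y ω = i}) :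
    (μ (S ⁻¹' u ∩ Z ⁻¹' t ∩ {ω | Y ω = i})).toReal
      = (μ (S ⁻¹' u ∩ {ω | Y ω = i})).toReal / (μ {ω | Y ω = i}).toReal
        * (μ (Z ⁻¹' t ∩ {ω | Y ω = i})).toReal := by
  set Ti : Set Ω := {ω | Y ω = i} with hTi
  have hTi_m' : MeasurableSet[MeasurableSpace.comap Y inferInstance] Ti := ⟨{x | x = i}, measurableSet_eq, rfl⟩
  have hTim : MeasurableSet Ti := hY.comap_le _ hTi_m'
  have hpi : (μ Ti).toReal ≠ 0 := (ENNReal.toReal_pos hμi.ne' (measure_ne_top _ _)).ne'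
  have hprod := (condIndepFun_iff_condExp_inter_preimage_eq_mul hS hZ).mp hCI u t hu ht
  have hAe := condexpY μ hY hY01 h1 h0 (hS hu)
  have hBe := condexpY μ hY hY01 h1 h0 (hZ ht)
  set cA : ℝ := (μ (S ⁻¹' u ∩ Ti)).toReal / (μ Ti).toReal with hcA
  set cB : ℝ := (μ (Z ⁻¹' t ∩ Ti)).toReal / (μ Ti).toReal with hcB
  have hint : Integrable ((S ⁻¹' u ∩ Z ⁻¹' t).indicator (fun _ => (1:ℝ))) μ :=
    (integrable_const (1:ℝ)).indicator ((hS hu).inter (hZ ht))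
  have hcalc : (μ (S ⁻¹' u ∩ Z ⁻¹' t ∩ Ti)).toReal
      = ∫ x in Ti, (μ⟦S ⁻¹' u ∩ Z ⁻¹' t | MeasurableSpace.comap Y inferInstance⟧) x ∂μ := by
    rw [setIntegral_condExp hY.comap_le hint hTi_m']
    rw [intIndic μ ((hS hu).inter (hZ ht)), one_mul]
  rw [hcalc]
  have hcongr : ∫ x in Ti, (μ⟦S ⁻¹' u ∩ Z ⁻¹' t | MeasurableSpace.comap Y inferInstance⟧) x ∂μ
      = ∫ _x in Ti, (cA * cB) ∂μ := by
    refine setIntegral_congr_ae hTim ?_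
    filter_upwards [hprod, hAe, hBe] with ω hp ha hb hω
    rw [hp, ha, hb]
    rcases hi with hi | hi
    · subst hi
      have hω' : Y ω = 0 := hω
      have hne1 : ¬ (Y ω = 1) := by rw [hω']; norm_num
      rw [if_neg hne1, if_neg hne1]
    · subst hi
      have hω' : Y ω = 1 := hω
      rw [if_pos hω', if_pos hω']
  rw [hcongr, setIntegral_const, measureReal_def, smul_eq_mul]
  rw [mul_comm, mul_assoc, hcB, div_mul_cancel₀ _ hpi]

/-- If `S ⊥ Z ∣ Y` with `Y ∈ {0,1}` and `P(S ≤ a ∣ Y=1) ≠ P(S ≤ a ∣ Y=0)`, then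
`P(Y = 1 ∣ Z) = (P(S ≤ a ∣ Z) − P(S ≤ a ∣ Y=0)) / (P(S ≤ a ∣ Y=1) − P(S ≤ a ∣ Y=0))` a.s. -/
theorem stmt7 {Ω γ : Type*} [MeasurableSpace Ω] [StandardBorelSpace Ω] [Nonempty Ω]
    [MeasurableSpace γ]
    (μ : Measure Ω) [IsProbabilityMeasure μ]
    (Y S : Ω → ℝ) (Z : Ω → γ) (hY : Measurable Y) (hS : Measurable S) (hZ : Measurable Z)
    (hY01 : ∀ ω, Y ω = 0 ∨ Y ω = 1)
    (h1 : 0 < μ {ω | Y ω = 1}) (h0 : 0 < μ {ω | Y ω = 0})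
    (hCI : CondIndepFun (MeasurableSpace.comap Y inferInstance) hY.comap_le S Z μ)
    (a : ℝ)
    (hne : (μ ({ω | S ω ≤ a} ∩ {ω | Y ω = 1})).toReal / (μ {ω | Y ω = 1}).toReal
         ≠ (μ ({ω | S ω ≤ a} ∩ {ω | Y ω = 0})).toReal / (μ {ω | Y ω = 0}).toReal) :
    μ[Set.indicator {ω | Y ω = 1} (fun _ => (1 : ℝ)) |
        MeasurableSpace.comap Z inferInstance]
      =ᵐ[μ] fun ω =>
        ((μ[Set.indicator {ω' | S ω' ≤ a} (fun _ => (1 : ℝ)) |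
            MeasurableSpace.comap Z inferInstance]) ω
          - (μ ({ω' | S ω' ≤ a} ∩ {ω' | Y ω' = 0})).toReal / (μ {ω' | Y ω' = 0}).toReal)
        / ((μ ({ω' | S ω' ≤ a} ∩ {ω' | Y ω' = 1})).toReal / (μ {ω' | Y ω' = 1}).toReal
          - (μ ({ω' | S ω' ≤ a} ∩ {ω' | Y ω' = 0})).toReal / (μ {ω' | Y ω' = 0}).toReal) := by
  set A : Set Ω := {ω | S ω ≤ a} with hA
  set T1 : Set Ω := {ω | Y ω = 1} with hT1
  set T0 : Set Ω := {ω | Y ω = 0} with hT0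
  set c1 : ℝ := (μ (A ∩ T1)).toReal / (μ T1).toReal with hc1
  set c0 : ℝ := (μ (A ∩ T0)).toReal / (μ T0).toReal with hc0
  have hAm : MeasurableSet A := hS measurableSet_Iic
  have hT1m : MeasurableSet T1 := hY (measurableSet_eq (a := (1 : ℝ)))
  have hAu : A = S ⁻¹' Set.Iic a := rfl
  have hcd : c1 - c0 ≠ 0 := sub_ne_zero.mpr hne
  set G : Ω → ℝ := μ[T1.indicator (fun _ => (1:ℝ)) | MeasurableSpace.comap Z inferInstance] with hG
  have hintT1 : Integrable (T1.indicator (fun _ => (1:ℝ))) μ :=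
    (integrable_const (1:ℝ)).indicator hT1m
  have step1 : (fun ω => (c1 - c0) * G ω + c0)
      =ᵐ[μ] μ[A.indicator (fun _ => (1:ℝ)) | MeasurableSpace.comap Z inferInstance] := by
    refine ae_eq_condExp_of_forall_setIntegral_eq hZ.comap_le
      ((integrable_const (1:ℝ)).indicator hAm) (fun s _ _ => ?_) (fun s hs _ => ?_) ?_
    · exact (((integrable_condExp.const_mul _)).add (integrable_const _)).integrableOn
    · obtain ⟨t, ht, rfl⟩ := hs
      rw [integral_add ((integrable_condExp.const_mul _).integrableOn.integrable)
        (integrable_const _).integrableOn.integrable, integral_const_mul,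
        setIntegral_condExp hZ.comap_le hintT1 ⟨t, ht, rfl⟩,
        intIndic μ hT1m, one_mul, setIntegral_const, measureReal_def, intIndic μ hAm, one_mul]
      have k1 : (μ (A ∩ Z ⁻¹' t ∩ T1)).toReal = c1 * (μ (Z ⁻¹' t ∩ T1)).toReal := by
        have := keyB μ hY hS hZ hY01 h1 h0 hCI (u := Set.Iic a) measurableSet_Iic ht 1 (Or.inr rfl) h1
        rw [← hAu] at this
        exact this
      have k0 : (μ (A ∩ Z ⁻¹' t ∩ T0)).toReal = c0 * (μ (Z ⁻¹' t ∩ T0)).toReal := by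
        have := keyB μ hY hS hZ hY01 h1 h0 hCI (u := Set.Iic a) measurableSet_Iic ht 0 (Or.inl rfl) h0
        rw [← hAu] at this
        exact this
      have splitA := splitY μ hY hY01 (A ∩ Z ⁻¹' t)
      have splitS := splitY μ hY hY01 (Z ⁻¹' t)
      rw [← hT1, ← hT0] at splitA splitS
      rw [splitA, splitS, Set.inter_comm T1 (Z ⁻¹' t), smul_eq_mul]
      linear_combination -k1 - k0
    · exact StronglyMeasurable.aestronglyMeasurable
        ((stronglyMeasurable_const.mul stronglyMeasurable_condExp).add
          stronglyMeasurable_const)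
  filter_upwards [step1] with ω h
  rw [← h, add_sub_cancel_right, mul_div_cancel_left₀ _ hcd]
end

section
/- Let Y ∈ {0,1}, S, Z be random variables with S ⊥ Z | Y and such that P(S ≤ a | Y=1) ≠ P(S ≤ a | Y=0) for some a. If g is a measurable function of Z with Z ⊥ S | g(Z), then Z ⊥ Y | g(Z). (A predictive surrogate satisfying the conditional-independence assumption is a perfect surrogate.) -/
open MeasureTheory ProbabilityTheory Set

lemma setIntegral_indicator_one {Ω : Type*} [MeasurableSpace Ω] (μ : Measure Ω) {s : Set Ω}
    (t : Set Ω) (hs : MeasurableSet s) :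
    ∫ x in t, s.indicator (fun _ => (1:ℝ)) x ∂μ = (μ (t ∩ s)).toReal := by
  rw [setIntegral_indicator hs]; simp [measureReal_def]

lemma condexp_comapY {Ω : Type*} [MeasurableSpace Ω] (μ : Measure Ω) [IsProbabilityMeasure μ]
    (Y : Ω → ℝ) (hY : Measurable Y) (hY01 : ∀ ω, Y ω = 0 ∨ Y ω = 1)
    (h1 : μ {ω | Y ω = 1} ≠ 0) (h0 : μ {ω | Y ω = 0} ≠ 0)
    {s : Set Ω} (hs : MeasurableSet s) :
    μ⟦s | MeasurableSpace.comap Y inferInstance⟧ =ᵐ[μ]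
      fun ω => {ω | Y ω = 1}.indicator (fun _ =>
        (μ (s ∩ {ω | Y ω = 1})).toReal / (μ {ω | Y ω = 1}).toReal
        - (μ (s ∩ {ω | Y ω = 0})).toReal / (μ {ω | Y ω = 0}).toReal) ω
        + (μ (s ∩ {ω | Y ω = 0})).toReal / (μ {ω | Y ω = 0}).toReal := by
  set B1 := {ω | Y ω = 1}
  set B0 := {ω | Y ω = 0}
  set p1 := (μ (s ∩ B1)).toReal / (μ B1).toReal with hp1
  set p0 := (μ (s ∩ B0)).toReal / (μ B0).toReal with hp0
  have hB1m : MeasurableSet B1 := hY (measurableSet_singleton 1)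
  have hB0m : MeasurableSet B0 := hY (measurableSet_singleton 0)
  have hB1Y : MeasurableSet[MeasurableSpace.comap Y inferInstance] B1 :=
    ⟨{1}, measurableSet_singleton 1, by ext ω; simp [B1]⟩
  have hmY : MeasurableSpace.comap Y inferInstance ≤ ‹MeasurableSpace Ω› := hY.comap_le
  have hr1 : (μ B1).toReal ≠ 0 := by simp [ENNReal.toReal_ne_zero, h1, measure_ne_top]
  have hr0 : (μ B0).toReal ≠ 0 := by simp [ENNReal.toReal_ne_zero, h0, measure_ne_top]
  have hdisj : Disjoint B1 B0 := by
    rw [Set.disjoint_left]; intro ω hω1 hω0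
    exact one_ne_zero ((hω1 : Y ω = 1).symm.trans (hω0 : Y ω = 0))
  have hunion : B1 ∪ B0 = univ := by
    ext ω; simp only [mem_union, mem_univ, iff_true]
    rcases hY01 ω with h | h
    · exact Or.inr h
    · exact Or.inl h
  have e1 : (μ B1).toReal * p1 = (μ (s ∩ B1)).toReal := by
    rw [hp1, ← mul_div_assoc, mul_comm, mul_div_assoc, div_self hr1, mul_one]
  have e0 : (μ B0).toReal * p0 = (μ (s ∩ B0)).toReal := by
    rw [hp0, ← mul_div_assoc, mul_comm, mul_div_assoc, div_self hr0, mul_one]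
  have hsum : (μ (s ∩ B1)).toReal + (μ (s ∩ B0)).toReal = (μ s).toReal := by
    rw [← ENNReal.toReal_add (measure_ne_top μ _) (measure_ne_top μ _),
      ← measure_union (hdisj.mono inter_subset_right inter_subset_right) (hs.inter hB0m),
      ← inter_union_distrib_left, hunion, inter_univ]
  have hrr : (μ B1).toReal + (μ B0).toReal = 1 := by
    rw [← ENNReal.toReal_add (measure_ne_top μ _) (measure_ne_top μ _),
      ← measure_union hdisj hB0m, hunion, measure_univ, ENNReal.toReal_one]
  have hInt : ∀ t : Set Ω, MeasurableSet t →
      ∫ x in t, (B1.indicator (fun _ => p1 - p0) x + p0) ∂μ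
        = (μ (t ∩ B1)).toReal * (p1 - p0) + (μ t).toReal * p0 := by
    intro t ht
    rw [integral_add (((integrable_const (p1 - p0)).indicator hB1m).integrableOn)
      (integrableOn_const (measure_ne_top _ _))]
    rw [setIntegral_indicator hB1m]
    simp [smul_eq_mul, measureReal_def]
  refine (ae_eq_condExp_of_forall_setIntegral_eq hmY
    ((integrable_const (1:ℝ)).indicator hs) (fun t _ _ => ?_) (fun t htm _ => ?_) ?_).symm
  · exact (((integrable_const (p1 - p0)).indicator hB1m).add (integrable_const p0)).integrableOn
  · obtain ⟨b, hb, rfl⟩ := htm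
    rw [hInt _ (hY hb), setIntegral_indicator_one μ _ hs]
    by_cases h1b : (1:ℝ) ∈ b <;> by_cases h0b : (0:ℝ) ∈ b
    · have ht : Y ⁻¹' b = univ := by
        apply eq_univ_of_forall; intro ω
        rcases hY01 ω with h | h
        · exact mem_preimage.mpr (h ▸ h0b)
        · exact mem_preimage.mpr (h ▸ h1b)
      rw [ht, univ_inter, measure_univ, ENNReal.toReal_one, univ_inter]
      linear_combination e1 + e0 + hsum - p0 * hrr
    · have ht : Y ⁻¹' b = B1 := by
        ext ω; rw [mem_preimage]
        constructor
        · intro hm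
          rcases hY01 ω with h | h
          · exact absurd (h ▸ hm) h0b
          · exact h
        · intro h; exact (h : Y ω = 1) ▸ h1b
      rw [ht, inter_self, inter_comm]
      linear_combination e1
    · have ht : Y ⁻¹' b = B0 := by
        ext ω; rw [mem_preimage]
        constructor
        · intro hm
          rcases hY01 ω with h | h
          · exact h
          · exact absurd (h ▸ hm) h1b
        · intro h; exact (h : Y ω = 0) ▸ h0b
      have h10 : B0 ∩ B1 = ∅ := by
        rw [← Set.disjoint_iff_inter_eq_empty]; exact hdisj.symm
      rw [ht, h10, inter_comm]
      simp only [measure_empty, ENNReal.toReal_zero, zero_mul, zero_add]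
      linear_combination e0
    · have ht : Y ⁻¹' b = ∅ := by
        ext ω; rw [mem_preimage]
        simp only [mem_empty_iff_false, iff_false]
        intro hm
        rcases hY01 ω with h | h
        · exact h0b (h ▸ hm)
        · exact h1b (h ▸ hm)
      simp [ht]
  · exact ((stronglyMeasurable_const.indicator hB1Y).add
      stronglyMeasurable_const).aestronglyMeasurable

lemma condexp_eq_of_sm {Ω : Type*} {m₁ m₂ : MeasurableSpace Ω} [mΩ : MeasurableSpace Ω]
    {μ : Measure Ω} [IsFiniteMeasure μ] (hm₂₁ : m₂ ≤ m₁) (hm₁ : m₁ ≤ mΩ)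
    {f q : Ω → ℝ} (hq : StronglyMeasurable[m₂] q) (hqi : Integrable q μ)
    (h : μ[f|m₁] =ᵐ[μ] q) : μ[f|m₂] =ᵐ[μ] μ[f|m₁] := by
  calc μ[f|m₂] =ᵐ[μ] μ[μ[f|m₁]|m₂] :=
        (condExp_condExp_of_le (f := f) (μ := μ) hm₂₁ hm₁).symm
    _ =ᵐ[μ] μ[q|m₂] := condExp_congr_ae h
    _ =ᵐ[μ] q := by rw [condExp_of_stronglyMeasurable (hm₂₁.trans hm₁) hq hqi]
    _ =ᵐ[μ] μ[f|m₁] := h.symm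

lemma prod_formula {Ω : Type*} {m₁ m₂ : MeasurableSpace Ω} [mΩ : MeasurableSpace Ω]
    {μ : Measure Ω} [IsFiniteMeasure μ] (hm₂₁ : m₂ ≤ m₁) (hm₁ : m₁ ≤ mΩ)
    {B t : Set Ω} (hB : MeasurableSet B) (ht : MeasurableSet[m₁] t)
    (hBB : μ⟦B|m₁⟧ =ᵐ[μ] μ⟦B|m₂⟧) :
    μ⟦t ∩ B|m₂⟧ =ᵐ[μ] fun ω => (μ⟦t|m₂⟧) ω * (μ⟦B|m₂⟧) ω := by
  have htm : MeasurableSet[mΩ] t := hm₁ t ht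
  have hsm1t : StronglyMeasurable[m₁] (t.indicator (fun _ => (1:ℝ))) :=
    stronglyMeasurable_const.indicator ht
  have hiprod : (t ∩ B).indicator (fun _ => (1:ℝ))
      = t.indicator (fun _ => (1:ℝ)) * B.indicator (fun _ => (1:ℝ)) := by
    funext ω
    by_cases h1 : ω ∈ t <;> by_cases h2 : ω ∈ B <;>
      simp [Set.indicator_apply, h1, h2, Set.mem_inter_iff, Pi.mul_apply]
  have hint_tB : Integrable (t.indicator (fun _ => (1:ℝ)) * B.indicator (fun _ => (1:ℝ))) μ := by
    rw [← hiprod]; exact (integrable_const 1).indicator (htm.inter hB)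
  set q := μ⟦B|m₂⟧ with hq
  have hqsm : StronglyMeasurable[m₂] q := stronglyMeasurable_condExp
  have hqi : Integrable q μ := integrable_condExp
  have step1 : μ[(t ∩ B).indicator (fun _ => (1:ℝ)) | m₁]
      =ᵐ[μ] t.indicator (fun _ => (1:ℝ)) * μ⟦B|m₁⟧ := by
    rw [hiprod]
    exact condExp_mul_of_stronglyMeasurable_left hsm1t hint_tB ((integrable_const 1).indicator hB)
  have hqt : q * t.indicator (fun _ => (1:ℝ)) = t.indicator q := by
    funext ω; by_cases h1 : ω ∈ t <;> simp [Set.indicator_apply, h1]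
  have hqt_int : Integrable (q * t.indicator (fun _ => (1:ℝ))) μ := by
    rw [hqt]; exact hqi.indicator htm
  have step3 : μ[q * t.indicator (fun _ => (1:ℝ)) | m₂]
      =ᵐ[μ] q * μ⟦t|m₂⟧ :=
    condExp_mul_of_stronglyMeasurable_left hqsm hqt_int ((integrable_const 1).indicator htm)
  calc μ⟦t ∩ B|m₂⟧
      =ᵐ[μ] μ[μ[(t ∩ B).indicator (fun _ => (1:ℝ)) | m₁] | m₂] :=
        (condExp_condExp_of_le (f := (t ∩ B).indicator (fun _ => (1:ℝ))) (μ := μ)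
          hm₂₁ hm₁).symm
    _ =ᵐ[μ] μ[q * t.indicator (fun _ => (1:ℝ)) | m₂] := by
        refine condExp_congr_ae (step1.trans ?_)
        filter_upwards [hBB] with ω h2
        simp only [Pi.mul_apply]
        rw [h2, mul_comm]
    _ =ᵐ[μ] q * μ⟦t|m₂⟧ := step3
    _ =ᵐ[μ] fun ω => (μ⟦t|m₂⟧) ω * q ω := by
        filter_upwards with ω using mul_comm _ _

lemma condexp_drop {Ω : Type*} {m₁ m₂ : MeasurableSpace Ω} [mΩ : MeasurableSpace Ω]
    {μ : Measure Ω} [IsProbabilityMeasure μ] (hm₂₁ : m₂ ≤ m₁) (hm₁ : m₁ ≤ mΩ)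
    {s : Set Ω} (hs : MeasurableSet s)
    (h : ∀ t : Set Ω, MeasurableSet[m₁] t →
      μ⟦t ∩ s|m₂⟧ =ᵐ[μ] fun ω => (μ⟦t|m₂⟧) ω * (μ⟦s|m₂⟧) ω) :
    μ⟦s|m₁⟧ =ᵐ[μ] μ⟦s|m₂⟧ := by
  set q := μ⟦s|m₂⟧ with hq
  refine (ae_eq_condExp_of_forall_setIntegral_eq hm₁
    ((integrable_const (1:ℝ)).indicator hs) (fun t _ _ => integrable_condExp.integrableOn)
    (fun t htm _ => ?_) (stronglyMeasurable_condExp.mono hm₂₁).aestronglyMeasurable).symm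
  have htmΩ : MeasurableSet[mΩ] t := hm₁ t htm
  have hqt : q * t.indicator (fun _ => (1:ℝ)) = t.indicator q := by
    funext ω; by_cases h1 : ω ∈ t <;> simp [Set.indicator_apply, h1]
  have hqt_int : Integrable (q * t.indicator (fun _ => (1:ℝ))) μ := by
    rw [hqt]; exact integrable_condExp.indicator htmΩ
  have step : μ[q * t.indicator (fun _ => (1:ℝ)) | m₂] =ᵐ[μ] q * μ⟦t|m₂⟧ :=
    condExp_mul_of_stronglyMeasurable_left stronglyMeasurable_condExp hqt_int
      ((integrable_const 1).indicator htmΩ)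
  calc ∫ x in t, q x ∂μ
      = ∫ x, t.indicator q x ∂μ := by rw [integral_indicator htmΩ]
    _ = ∫ x, (q * t.indicator (fun _ => (1:ℝ))) x ∂μ := by rw [hqt]
    _ = ∫ x, (μ[q * t.indicator (fun _ => (1:ℝ)) | m₂]) x ∂μ :=
        (integral_condExp (hm₂₁.trans hm₁)).symm
    _ = ∫ x, (q * μ⟦t|m₂⟧) x ∂μ := integral_congr_ae step
    _ = ∫ x, (μ⟦t ∩ s|m₂⟧) x ∂μ := by
        refine (integral_congr_ae ?_).symm
        refine (h t htm).trans ?_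
        filter_upwards with ω using mul_comm _ _
    _ = ∫ x, (t ∩ s).indicator (fun _ => (1:ℝ)) x ∂μ :=
        integral_condExp (hm₂₁.trans hm₁)
    _ = ∫ x in t, s.indicator (fun _ => (1:ℝ)) x ∂μ := by
        rw [integral_indicator (htmΩ.inter hs), setIntegral_indicator hs]

lemma condexp_compl_one {Ω : Type*} {m : MeasurableSpace Ω} [mΩ : MeasurableSpace Ω]
    {μ : Measure Ω} [IsProbabilityMeasure μ] (hm : m ≤ mΩ) {B1 B0 : Set Ω}
    (hB1m : MeasurableSet B1)
    (hcompl : B0.indicator (fun _ => (1:ℝ)) = (fun _ => (1:ℝ)) - B1.indicator (fun _ => (1:ℝ))) :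
    μ⟦B0|m⟧ =ᵐ[μ] fun ω => 1 - (μ⟦B1|m⟧) ω := by
  rw [hcompl]
  refine (condExp_sub (integrable_const 1) ((integrable_const 1).indicator hB1m) _).trans ?_
  rw [condExp_const hm]
  filter_upwards with ω
  simp

lemma stmt8_aux {Ω : Type*} {mY m₁ m₂ : MeasurableSpace Ω} [mΩ : MeasurableSpace Ω]
    [StandardBorelSpace Ω] [Nonempty Ω] {γ δ : Type*}
    [MeasurableSpace γ] [MeasurableSpace δ]
    (μ : Measure Ω) [IsProbabilityMeasure μ]
    (Y S : Ω → ℝ) (Z : Ω → γ) (g : γ → δ)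
    (hY : Measurable Y) (hS : Measurable S) (hZ : Measurable Z) (hg : Measurable g)
    (hmYeq : mY = MeasurableSpace.comap Y inferInstance)
    (hm₁eq : m₁ = MeasurableSpace.comap Z inferInstance)
    (hm₂eq : m₂ = MeasurableSpace.comap (fun ω => g (Z ω)) inferInstance)
    (hmYle : mY ≤ mΩ) (hm₂le : m₂ ≤ mΩ)
    (hY01 : ∀ ω, Y ω = 0 ∨ Y ω = 1)
    (h1 : 0 < μ {ω | Y ω = 1}) (h0 : 0 < μ {ω | Y ω = 0})
    (hCI : CondIndepFun mY hmYle S Z μ)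
    (a : ℝ)
    (hne : (μ ({ω | S ω ≤ a} ∩ {ω | Y ω = 1})).toReal / (μ {ω | Y ω = 1}).toReal
         ≠ (μ ({ω | S ω ≤ a} ∩ {ω | Y ω = 0})).toReal / (μ {ω | Y ω = 0}).toReal)
    (hCI2 : CondIndepFun m₂ hm₂le Z S μ) :
    CondIndepFun m₂ hm₂le Z Y μ := by
  have hmY : mY ≤ mΩ := hmYle
  have hm₁ : m₁ ≤ mΩ := by rw [hm₁eq]; exact hZ.comap_le
  have hm₂₁ : m₂ ≤ m₁ := by
    rw [hm₂eq, hm₁eq, show (fun ω => g (Z ω)) = g ∘ Z from rfl,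
      ← MeasurableSpace.comap_comp]
    exact MeasurableSpace.comap_mono hg.comap_le
  set B1 := {ω | Y ω = 1} with hB1def
  set B0 := {ω | Y ω = 0} with hB0def
  set s := {ω | S ω ≤ a} with hsdef
  have hs : MeasurableSet s := measurableSet_le hS measurable_const
  have hB1m : MeasurableSet B1 := hY (measurableSet_singleton 1)
  have hB1Y : MeasurableSet[mY] B1 := by
    rw [hmYeq]; exact ⟨{1}, measurableSet_singleton 1, by ext ω; simp [hB1def]⟩
  have hsIic : S ⁻¹' Set.Iic a = s := rfl
  set p1 := (μ (s ∩ B1)).toReal / (μ B1).toReal with hp1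
  set p0 := (μ (s ∩ B0)).toReal / (μ B0).toReal with hp0
  have hpne : p1 - p0 ≠ 0 := sub_ne_zero.mpr hne
  -- explicit conditional expectation given Y
  have hY1 := condexp_comapY μ Y hY hY01 h1.ne' h0.ne' hs
  rw [← hmYeq] at hY1
  -- product formula from hCI
  have hprod1 := (condIndepFun_iff_condExp_inter_preimage_eq_mul hS hZ).mp hCI
  -- integral identity on σ(Z)-sets
  have hA : ∀ t : Set Ω, MeasurableSet[m₁] t →
      (μ (t ∩ s)).toReal = (μ (t ∩ B1)).toReal * (p1 - p0) + (μ t).toReal * p0 := by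
    intro t htm
    rw [hm₁eq] at htm
    obtain ⟨v, hv, hveq⟩ := htm
    subst hveq
    set t := Z ⁻¹' v with htdef
    have htm : MeasurableSet t := hZ hv
    have hprod := hprod1 (Set.Iic a) v measurableSet_Iic hv
    rw [hsIic] at hprod
    have expand : (fun ω => (μ⟦s|mY⟧) ω * (μ⟦t|mY⟧) ω) =ᵐ[μ]
        fun ω => B1.indicator (fun x => (p1 - p0) * (μ⟦t|mY⟧) x) ω
          + p0 * (μ⟦t|mY⟧) ω := by
      filter_upwards [hY1] with ω hω
      rw [hω]
      by_cases h1ω : Y ω = 1 <;>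
        simp only [Set.indicator_apply, Set.mem_setOf_eq, hB1def, h1ω, if_true, if_false,
          eq_self_iff_true, hp1, hp0] <;> ring
    have calc1 : (μ (s ∩ t)).toReal
        = (μ (B1 ∩ t)).toReal * (p1 - p0) + (μ t).toReal * p0 := by
      have e1 : (μ (s ∩ t)).toReal = ∫ x, (s ∩ t).indicator (fun _ => (1:ℝ)) x ∂μ := by
        rw [integral_indicator (hs.inter htm)]; simp [measureReal_def]
      rw [e1, ← integral_condExp hmY]
      rw [integral_congr_ae (hprod.trans expand)]
      rw [integral_add (((integrable_condExp.const_mul _).indicator hB1m))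
        (integrable_condExp.const_mul _)]
      rw [integral_indicator hB1m, integral_const_mul, integral_const_mul,
        setIntegral_condExp hmY ((integrable_const 1).indicator htm) hB1Y,
        integral_condExp hmY, setIntegral_indicator_one μ _ htm,
        integral_indicator htm]
      simp [mul_comm, measureReal_def]
    rw [inter_comm t s, inter_comm t B1]
    exact calc1
  -- conditional expectation of s given σ(Z)
  have hAc : μ⟦s|m₁⟧ =ᵐ[μ] fun ω => (μ⟦B1|m₁⟧) ω * (p1 - p0) + p0 := by
    refine (ae_eq_condExp_of_forall_setIntegral_eq hm₁
      ((integrable_const (1:ℝ)).indicator hs)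
      (fun t _ _ => ((integrable_condExp.mul_const _).add (integrable_const _)).integrableOn)
      (fun t htm _ => ?_)
      (((stronglyMeasurable_condExp.mul_const _).add
        stronglyMeasurable_const).aestronglyMeasurable)).symm
    have htmΩ : MeasurableSet t := hm₁ t htm
    rw [setIntegral_indicator_one μ _ hs]
    simp only [Pi.add_apply]
    rw [integral_add (((integrable_condExp (m := m₁) (μ := μ)
          (f := B1.indicator fun _ => (1:ℝ))).mul_const (p1 - p0)).integrableOn)
        (integrableOn_const (C := p0) (measure_ne_top _ _)),
      integral_mul_const, setIntegral_condExp hm₁ ((integrable_const 1).indicator hB1m) htm,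
      setIntegral_indicator_one μ _ hB1m, setIntegral_const]
    rw [hA t htm]
    simp [smul_eq_mul, measureReal_def]
  -- product formula from hCI2 and drop of σ-algebra for s
  have hprod2 := (condIndepFun_iff_condExp_inter_preimage_eq_mul hZ hS).mp hCI2
  have hB : μ⟦s|m₁⟧ =ᵐ[μ] μ⟦s|m₂⟧ := by
    refine condexp_drop hm₂₁ hm₁ hs ?_
    intro t htm
    rw [hm₁eq] at htm
    obtain ⟨v, hv, hveq⟩ := htm
    subst hveq
    have := hprod2 v (Set.Iic a) hv measurableSet_Iic
    rwa [hsIic] at this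
  -- conditional expectation of B1 drops too
  have hC : μ⟦B1|m₁⟧ =ᵐ[μ] μ⟦B1|m₂⟧ := by
    have hf₁ : μ⟦B1|m₁⟧ =ᵐ[μ] fun ω => ((μ⟦s|m₂⟧) ω - p0) * (p1 - p0)⁻¹ := by
      filter_upwards [hAc, hB] with ω hω1 hω2
      rw [← hω2, hω1]
      field_simp
      ring
    exact (condexp_eq_of_sm hm₂₁ hm₁
      ((stronglyMeasurable_condExp.sub stronglyMeasurable_const).mul_const _)
      ((integrable_condExp.sub (integrable_const _)).mul_const _) hf₁).symm
  -- every σ(Y)-event drops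
  have hind : B0.indicator (fun _ => (1:ℝ))
      = (fun _ => (1:ℝ)) - B1.indicator (fun _ => (1:ℝ)) := by
    funext ω
    rcases hY01 ω with h | h
    · have ha1 : ω ∈ B0 := h
      have ha2 : ω ∉ B1 := fun hc => one_ne_zero ((hc : Y ω = 1).symm.trans h)
      simp [Set.indicator_apply, ha1, ha2]
    · have ha1 : ω ∉ B0 := fun hc => one_ne_zero (h.symm.trans (hc : Y ω = 0))
      have ha2 : ω ∈ B1 := h
      simp [Set.indicator_apply, ha1, ha2]
  have hB0c1 : μ⟦B0|m₁⟧ =ᵐ[μ] fun ω => 1 - (μ⟦B1|m₁⟧) ω :=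
    condexp_compl_one hm₁ hB1m hind
  have hB0c2 : μ⟦B0|m₂⟧ =ᵐ[μ] fun ω => 1 - (μ⟦B1|m₂⟧) ω :=
    condexp_compl_one (hm₂₁.trans hm₁) hB1m hind
  have hBany : ∀ b : Set ℝ, MeasurableSet b →
      μ⟦Y ⁻¹' b|m₁⟧ =ᵐ[μ] μ⟦Y ⁻¹' b|m₂⟧ := by
    intro b hb
    by_cases h1b : (1:ℝ) ∈ b <;> by_cases h0b : (0:ℝ) ∈ b
    · have ht : Y ⁻¹' b = univ := by
        apply eq_univ_of_forall; intro ω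
        rcases hY01 ω with h | h
        · exact mem_preimage.mpr (h ▸ h0b)
        · exact mem_preimage.mpr (h ▸ h1b)
      have hu : (univ : Set Ω).indicator (fun _ => (1:ℝ)) = fun _ => (1:ℝ) :=
        indicator_univ _
      rw [ht, hu, condExp_const hm₁, condExp_const (hm₂₁.trans hm₁)]
    · have ht : Y ⁻¹' b = B1 := by
        ext ω; rw [mem_preimage]
        constructor
        · intro hm
          rcases hY01 ω with h | h
          · exact absurd (h ▸ hm) h0b
          · exact h
        · intro h; exact (h : Y ω = 1) ▸ h1b
      rw [ht]; exact hC
    · have ht : Y ⁻¹' b = B0 := by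
        ext ω; rw [mem_preimage]
        constructor
        · intro hm
          rcases hY01 ω with h | h
          · exact h
          · exact absurd (h ▸ hm) h1b
        · intro h; exact (h : Y ω = 0) ▸ h0b
      rw [ht]
      refine hB0c1.trans (Filter.EventuallyEq.trans ?_ hB0c2.symm)
      filter_upwards [hC] with ω hω
      rw [hω]
    · have ht : Y ⁻¹' b = ∅ := by
        ext ω; rw [mem_preimage]
        simp only [mem_empty_iff_false, iff_false]
        intro hm
        rcases hY01 ω with h | h
        · exact h0b (h ▸ hm)
        · exact h1b (h ▸ hm)
      have hzero : (∅ : Set Ω).indicator (fun _ => (1:ℝ)) = (0 : Ω → ℝ) := by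
        funext ω; simp
      rw [ht, hzero]
      simp [condExp_zero]
  -- conclude
  rw [condIndepFun_iff_condExp_inter_preimage_eq_mul hZ hY]
  intro v b hv hb
  refine prod_formula hm₂₁ hm₁ (hY hb) ?_ (hBany b hb)
  rw [hm₁eq]; exact ⟨v, hv, rfl⟩

/-- A predictive surrogate satisfying `S ⊥ Z ∣ Y` is perfect: if moreover
`Z ⊥ S ∣ g(Z)`, then `Z ⊥ Y ∣ g(Z)`. -/
theorem stmt8 {Ω γ δ : Type*} [MeasurableSpace Ω] [StandardBorelSpace Ω] [Nonempty Ω]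
    [MeasurableSpace γ] [MeasurableSpace δ]
    (μ : Measure Ω) [IsProbabilityMeasure μ]
    (Y S : Ω → ℝ) (Z : Ω → γ) (g : γ → δ)
    (hY : Measurable Y) (hS : Measurable S) (hZ : Measurable Z) (hg : Measurable g)
    (hY01 : ∀ ω, Y ω = 0 ∨ Y ω = 1)
    (h1 : 0 < μ {ω | Y ω = 1}) (h0 : 0 < μ {ω | Y ω = 0})
    (hCI : CondIndepFun (MeasurableSpace.comap Y inferInstance) hY.comap_le S Z μ)
    (a : ℝ)
    (hne : (μ ({ω | S ω ≤ a} ∩ {ω | Y ω = 1})).toReal / (μ {ω | Y ω = 1}).toReal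
         ≠ (μ ({ω | S ω ≤ a} ∩ {ω | Y ω = 0})).toReal / (μ {ω | Y ω = 0}).toReal)
    (hCI2 : CondIndepFun (MeasurableSpace.comap (fun ω => g (Z ω)) inferInstance)
      ((hg.comp hZ).comap_le) Z S μ) :
    CondIndepFun (MeasurableSpace.comap (fun ω => g (Z ω)) inferInstance)
      ((hg.comp hZ).comap_le) Z Y μ :=
  stmt8_aux μ Y S Z g hY hS hZ hg rfl rfl rfl hY.comap_le ((hg.comp hZ).comap_le)
    hY01 h1 h0 hCI a hne hCI2
end

section
/- Suppose X ⊥ Y | Z and Y ⊥ Z | g(Z) for a measurable function g of Z. Then X ⊥ Y | (g(Z), h(Z)) for any measurable function h of Z. -/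
open MeasureTheory ProbabilityTheory

private lemma condexp_indicator_bound {Ω : Type*} (m : MeasurableSpace Ω)
    {mΩ : MeasurableSpace Ω} (μ : Measure Ω)
    [IsProbabilityMeasure μ] (hm : m ≤ mΩ) {t : Set Ω}
    (ht : MeasurableSet[mΩ] t) :
    ∀ᵐ ω ∂μ, ‖(μ⟦t|m⟧) ω‖ ≤ 1 := by
  have hint : Integrable (t.indicator fun _ => (1 : ℝ)) μ :=
    (integrable_const (1 : ℝ)).indicator ht
  have hnn : 0 ≤ᵐ[μ] μ⟦t|m⟧ :=
    condExp_nonneg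
      (Filter.Eventually.of_forall fun ω => Set.indicator_nonneg (fun _ _ => zero_le_one) ω)
  have hle : μ⟦t|m⟧ ≤ᵐ[μ] μ[(fun _ => (1 : ℝ))|m] :=
    condExp_mono hint (integrable_const 1)
      (Filter.Eventually.of_forall fun ω => Set.indicator_le_self' (fun _ _ => zero_le_one) ω)
  have hone : μ[(fun _ => (1 : ℝ))|m] = fun _ => (1 : ℝ) := condExp_const hm 1
  filter_upwards [hnn, hle] with ω h0 h1
  simp only [Pi.zero_apply] at h0
  rw [hone] at h1
  rw [Real.norm_eq_abs, abs_le]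
  exact ⟨by linarith, h1⟩

private lemma condIndep_aux {Ω : Type*} {mZ mg m' mX mY : MeasurableSpace Ω}
    {mΩ : MeasurableSpace Ω} [StandardBorelSpace Ω]
    [Nonempty Ω] (μ : Measure Ω) [IsProbabilityMeasure μ]
    (hmZ : mZ ≤ mΩ) (hmgm' : mg ≤ m') (hm'Z : m' ≤ mZ) (hmX : mX ≤ mΩ) (hmY : mY ≤ mΩ)
    (hXY : CondIndep mZ mX mY hmZ μ)
    (hYZ : CondIndep mg mY mZ ((hmgm'.trans hm'Z).trans hmZ) μ) :
    CondIndep m' mX mY (hm'Z.trans hmZ) μ := by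
  have hmg : mg ≤ mΩ := (hmgm'.trans hm'Z).trans hmZ
  have hm' : m' ≤ mΩ := hm'Z.trans hmZ
  rw [condIndep_iff _ _ _ _ hmX hmY] at hXY
  rw [condIndep_iff _ _ _ _ hmY hmZ] at hYZ
  rw [condIndep_iff _ _ _ _ hmX hmY]
  intro t1 t2 ht1 ht2
  have ht1m : MeasurableSet[mΩ] t1 := hmX t1 ht1
  have ht2m : MeasurableSet[mΩ] t2 := hmY t2 ht2
  -- Key: μ⟦t2 | mg⟧ is a version of μ⟦t2 | mZ⟧, from Y ⊥ Z ∣ g(Z)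
  have key : (μ⟦t2|mg⟧) =ᵐ[μ] μ⟦t2|mZ⟧ := by
    refine ae_eq_condExp_of_forall_setIntegral_eq hmZ
      ((integrable_const (1 : ℝ)).indicator ht2m)
      (fun s _ _ => integrable_condExp.integrableOn) (fun u hu _ => ?_)
      (stronglyMeasurable_condExp.mono (hmgm'.trans hm'Z)).aestronglyMeasurable
    have hum : MeasurableSet[mΩ] u := hmZ u hu
    have hpull : μ[(μ⟦t2|mg⟧) * (u.indicator fun _ => (1 : ℝ))|mg] =ᵐ[μ]
        (μ⟦t2|mg⟧) * μ⟦u|mg⟧ :=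
      condExp_stronglyMeasurable_mul_of_bound hmg stronglyMeasurable_condExp
        ((integrable_const (1 : ℝ)).indicator hum) 1
        (condexp_indicator_bound mg μ hmg ht2m)
    have hint_mul : Integrable ((μ⟦t2|mg⟧) * (u.indicator fun _ => (1 : ℝ))) μ :=
      ((integrable_const (1 : ℝ)).indicator hum).bdd_mul
        (stronglyMeasurable_condExp.mono hmg).aestronglyMeasurable
        (condexp_indicator_bound mg μ hmg ht2m)
    calc ∫ x in u, (μ⟦t2|mg⟧) x ∂μ
        = ∫ x, ((μ⟦t2|mg⟧) * (u.indicator fun _ => (1 : ℝ))) x ∂μ := by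
          rw [← integral_indicator hum]
          congr 1
          ext x
          by_cases hx : x ∈ u <;> simp [hx]
      _ = ∫ x, (μ[(μ⟦t2|mg⟧) * (u.indicator fun _ => (1 : ℝ))|mg]) x ∂μ :=
          (integral_condExp hmg).symm
      _ = ∫ x, ((μ⟦t2|mg⟧) * μ⟦u|mg⟧) x ∂μ := integral_congr_ae hpull
      _ = ∫ x, (μ⟦t2 ∩ u|mg⟧) x ∂μ := (integral_congr_ae (hYZ t2 u ht2 hu)).symm
      _ = ∫ x, (t2 ∩ u).indicator (fun _ => (1 : ℝ)) x ∂μ :=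
          integral_condExp hmg
      _ = (μ (t2 ∩ u)).toReal := by
          rw [integral_indicator (ht2m.inter hum)]; simp; rfl
      _ = ∫ x in u, (t2.indicator fun _ => (1 : ℝ)) x ∂μ := by
          rw [setIntegral_indicator ht2m]; simp [Set.inter_comm]; rfl
  -- t2 conditional expectation at m' equals μ⟦t2|mg⟧
  have ht2m' : (μ⟦t2|m'⟧) =ᵐ[μ] μ⟦t2|mg⟧ := by
    calc (μ⟦t2|m'⟧) =ᵐ[μ] μ[(μ⟦t2|mZ⟧)|m'] := (condExp_condExp_of_le hm'Z hmZ).symm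
      _ =ᵐ[μ] μ[(μ⟦t2|mg⟧)|m'] := condExp_congr_ae key.symm
      _ =ᵐ[μ] μ⟦t2|mg⟧ := by
          rw [condExp_of_stronglyMeasurable hm'
            (stronglyMeasurable_condExp.mono hmgm') integrable_condExp]
  -- main computation
  have main : (μ⟦t1 ∩ t2|m'⟧) =ᵐ[μ] (μ⟦t2|mg⟧) * μ⟦t1|m'⟧ := by
    calc (μ⟦t1 ∩ t2|m'⟧)
        =ᵐ[μ] μ[(μ⟦t1 ∩ t2|mZ⟧)|m'] := (condExp_condExp_of_le hm'Z hmZ).symm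
      _ =ᵐ[μ] μ[(μ⟦t1|mZ⟧) * (μ⟦t2|mZ⟧)|m'] := condExp_congr_ae (hXY t1 t2 ht1 ht2)
      _ =ᵐ[μ] μ[(μ⟦t2|mg⟧) * (μ⟦t1|mZ⟧)|m'] := by
          refine condExp_congr_ae ?_
          filter_upwards [key] with ω hω
          simp only [Pi.mul_apply]
          rw [← hω, mul_comm]
      _ =ᵐ[μ] (μ⟦t2|mg⟧) * μ[(μ⟦t1|mZ⟧)|m'] :=
          condExp_stronglyMeasurable_mul_of_bound hm'
            (stronglyMeasurable_condExp.mono hmgm') integrable_condExp 1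
            (condexp_indicator_bound mg μ hmg ht2m)
      _ =ᵐ[μ] (μ⟦t2|mg⟧) * μ⟦t1|m'⟧ := by
          filter_upwards [condExp_condExp_of_le hm'Z hmZ
            (f := t1.indicator fun _ => (1 : ℝ)) (μ := μ)] with ω hω
          simp only [Pi.mul_apply, hω]
  calc (μ⟦t1 ∩ t2|m'⟧) =ᵐ[μ] (μ⟦t2|mg⟧) * μ⟦t1|m'⟧ := main
    _ =ᵐ[μ] (μ⟦t1|m'⟧) * μ⟦t2|m'⟧ := by
        filter_upwards [ht2m'] with ω hω
        simp only [Pi.mul_apply, ← hω, mul_comm]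

/-- If `X ⊥ Y ∣ Z` and `Y ⊥ Z ∣ g(Z)`, then `X ⊥ Y ∣ (g(Z), h(Z))` for any
measurable `h`. -/
theorem stmt9 {Ω α β γ δ ε : Type*} [MeasurableSpace Ω] [StandardBorelSpace Ω] [Nonempty Ω]
    [MeasurableSpace α] [MeasurableSpace β] [MeasurableSpace γ]
    [MeasurableSpace δ] [MeasurableSpace ε]
    (μ : Measure Ω) [IsProbabilityMeasure μ]
    (X : Ω → α) (Y : Ω → β) (Z : Ω → γ) (g : γ → δ) (h : γ → ε)
    (hX : Measurable X) (hY : Measurable Y) (hZ : Measurable Z)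
    (hg : Measurable g) (hh : Measurable h)
    (hXY : CondIndepFun (MeasurableSpace.comap Z inferInstance) hZ.comap_le X Y μ)
    (hYZ : CondIndepFun (MeasurableSpace.comap (fun ω => g (Z ω)) inferInstance)
      ((hg.comp hZ).comap_le) Y Z μ) :
    CondIndepFun (MeasurableSpace.comap (fun ω => (g (Z ω), h (Z ω))) inferInstance)
      (((hg.comp hZ).prodMk (hh.comp hZ)).comap_le) X Y μ := by
  have hmgm' : MeasurableSpace.comap (fun ω => g (Z ω)) inferInstance ≤
      MeasurableSpace.comap (fun ω => (g (Z ω), h (Z ω))) inferInstance := by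
    have h1 : (fun ω => g (Z ω)) = Prod.fst ∘ (fun ω => (g (Z ω), h (Z ω))) := rfl
    rw [h1, ← MeasurableSpace.comap_comp]
    exact MeasurableSpace.comap_mono measurable_fst.comap_le
  have hm'Z : MeasurableSpace.comap (fun ω => (g (Z ω), h (Z ω))) inferInstance ≤
      MeasurableSpace.comap Z inferInstance := by
    have h1 : (fun ω => (g (Z ω), h (Z ω))) = (fun z => (g z, h z)) ∘ Z := rfl
    rw [h1, ← MeasurableSpace.comap_comp]
    exact MeasurableSpace.comap_mono (hg.prodMk hh).comap_le
  rw [condIndepFun_iff_condIndep] at hXY hYZ ⊢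
  exact condIndep_aux μ hZ.comap_le hmgm' hm'Z hX.comap_le hY.comap_le hXY hYZ
end

section
/- Suppose X ⊥ Y | Z. Then for any measurable function g of Z, the conditional independence X ⊥ Y | Z continues to hold given Z together with g(Z); moreover if X' is sampled from the conditional distribution of X given Z independently of (X, Y), then X' and X are exchangeable conditional on (Z, Y). -/
open MeasureTheory ProbabilityTheory

/-- If `X ⊥ Y ∣ Z`, then `X ⊥ Y ∣ (Z, g(Z))`; moreover, if `X'` is sampled from the
conditional distribution of `X` given `Z` independently of `(X,Y)` given `Z`, then
`(X, X')` and `(X', X)` have the same conditional distribution given `(Z, Y)`. -/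
theorem stmt10 {Ω α β γ δ : Type*} [MeasurableSpace Ω] [StandardBorelSpace Ω] [Nonempty Ω]
    [MeasurableSpace α] [StandardBorelSpace α] [Nonempty α]
    [MeasurableSpace β] [MeasurableSpace γ] [MeasurableSpace δ]
    (μ : Measure Ω) [IsProbabilityMeasure μ]
    (X X' : Ω → α) (Y : Ω → β) (Z : Ω → γ) (g : γ → δ)
    (hX : Measurable X) (hX' : Measurable X') (hY : Measurable Y) (hZ : Measurable Z)
    (hg : Measurable g)
    (hXY : CondIndepFun (MeasurableSpace.comap Z inferInstance) hZ.comap_le X Y μ)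
    (hdist : ∀ᵐ z ∂(μ.map Z), condDistrib X Z μ z = condDistrib X' Z μ z)
    (hX'ind : CondIndepFun (MeasurableSpace.comap Z inferInstance) hZ.comap_le X'
      (fun ω => (X ω, Y ω)) μ) :
    CondIndepFun (MeasurableSpace.comap (fun ω => (Z ω, g (Z ω))) inferInstance)
        ((hZ.prodMk (hg.comp hZ)).comap_le) X Y μ
      ∧ ∀ᵐ w ∂(μ.map fun ω => (Z ω, Y ω)),
          condDistrib (fun ω => (X ω, X' ω)) (fun ω => (Z ω, Y ω)) μ w
            = condDistrib (fun ω => (X' ω, X ω)) (fun ω => (Z ω, Y ω)) μ w := by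
  have hle : MeasurableSpace.comap Z inferInstance ≤ ‹MeasurableSpace Ω› := hZ.comap_le
  -- the two σ-algebras coincide
  have hcomap : MeasurableSpace.comap (fun ω => (Z ω, g (Z ω))) inferInstance
      = MeasurableSpace.comap Z inferInstance := by
    apply le_antisymm
    · have h1 : (fun ω => (Z ω, g (Z ω))) = (fun z => (z, g z)) ∘ Z := rfl
      rw [h1, ← MeasurableSpace.comap_comp]
      exact MeasurableSpace.comap_mono (measurable_id.prodMk hg).comap_le
    · have h1 : Z = Prod.fst ∘ (fun ω => (Z ω, g (Z ω))) := rfl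
      conv_lhs => rw [h1]
      rw [← MeasurableSpace.comap_comp]
      exact MeasurableSpace.comap_mono measurable_fst.comap_le
  constructor
  · convert hXY using 2
  -- Second part: equality of joint laws
  -- conditional expectations of indicators of `X` and `X'` preimages agree
  have hdist' : ∀ᵐ ω ∂μ, condDistrib X Z μ (Z ω) = condDistrib X' Z μ (Z ω) :=
    ae_of_ae_map hZ.aemeasurable hdist
  have hswap : ∀ A : Set α, MeasurableSet A →
      (μ⟦X ⁻¹' A | MeasurableSpace.comap Z inferInstance⟧)
        =ᵐ[μ] μ⟦X' ⁻¹' A | MeasurableSpace.comap Z inferInstance⟧ := by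
    intro A hA
    have c1 := condDistrib_ae_eq_condExp hZ hX hA (μ := μ)
    have c2 := condDistrib_ae_eq_condExp hZ hX' hA (μ := μ)
    refine c1.symm.trans ((Filter.EventuallyEq.trans ?_ c2))
    filter_upwards [hdist'] with ω hω
    rw [hω]
  have hfac1 := (condIndepFun_iff_condExp_inter_preimage_eq_mul hX hY).mp hXY
  have hfac2 := (condIndepFun_iff_condExp_inter_preimage_eq_mul hX' (hX.prodMk hY)).mp hX'ind
  -- the key condexp factorization
  have factor : ∀ (A B : Set α) (T : Set β), MeasurableSet A → MeasurableSet B →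
      MeasurableSet T →
      (μ⟦X' ⁻¹' B ∩ (X ⁻¹' A ∩ Y ⁻¹' T) | MeasurableSpace.comap Z inferInstance⟧)
        =ᵐ[μ] fun ω => (μ⟦X' ⁻¹' B | MeasurableSpace.comap Z inferInstance⟧) ω *
            ((μ⟦X ⁻¹' A | MeasurableSpace.comap Z inferInstance⟧) ω *
              (μ⟦Y ⁻¹' T | MeasurableSpace.comap Z inferInstance⟧) ω) := by
    intro A B T hA hB hT
    have h2 := hfac2 B (A ×ˢ T) hB (hA.prod hT)
    rw [Set.mk_preimage_prod] at h2
    refine h2.trans ?_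
    filter_upwards [hfac1 A T hA hT] with ω hω
    rw [hω]
  -- key measure identity
  have key : ∀ (S : Set γ) (T : Set β) (A B : Set α), MeasurableSet S → MeasurableSet T →
      MeasurableSet A → MeasurableSet B →
      μ ((Z ⁻¹' S ∩ Y ⁻¹' T) ∩ (X ⁻¹' A ∩ X' ⁻¹' B))
        = μ ((Z ⁻¹' S ∩ Y ⁻¹' T) ∩ (X' ⁻¹' A ∩ X ⁻¹' B)) := by
    intro S T A B hS hT hA hB
    have hset1 : (Z ⁻¹' S ∩ Y ⁻¹' T) ∩ (X ⁻¹' A ∩ X' ⁻¹' B)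
        = Z ⁻¹' S ∩ (X' ⁻¹' B ∩ (X ⁻¹' A ∩ Y ⁻¹' T)) := by
      ext ω; simp only [Set.mem_inter_iff, Set.mem_preimage]; tauto
    have hset2 : (Z ⁻¹' S ∩ Y ⁻¹' T) ∩ (X' ⁻¹' A ∩ X ⁻¹' B)
        = Z ⁻¹' S ∩ (X' ⁻¹' A ∩ (X ⁻¹' B ∩ Y ⁻¹' T)) := by
      ext ω; simp only [Set.mem_inter_iff, Set.mem_preimage]; tauto
    rw [hset1, hset2]
    have hSm : MeasurableSet[MeasurableSpace.comap Z inferInstance] (Z ⁻¹' S) := ⟨S, hS, rfl⟩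
    have meascalc : ∀ W : Set Ω, MeasurableSet W →
        (μ (Z ⁻¹' S ∩ W)).toReal
          = ∫ ω in Z ⁻¹' S, (μ⟦W | MeasurableSpace.comap Z inferInstance⟧) ω ∂μ := by
      intro W hW
      rw [setIntegral_condExp hle ((integrable_const (1:ℝ)).indicator hW) hSm,
        setIntegral_indicator hW, setIntegral_const, smul_eq_mul, mul_one]
      rfl
    have hW1 : MeasurableSet (X' ⁻¹' B ∩ (X ⁻¹' A ∩ Y ⁻¹' T)) :=
      (hX' hB).inter ((hX hA).inter (hY hT))
    have hW2 : MeasurableSet (X' ⁻¹' A ∩ (X ⁻¹' B ∩ Y ⁻¹' T)) :=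
      (hX' hA).inter ((hX hB).inter (hY hT))
    have hcond : (μ⟦X' ⁻¹' B ∩ (X ⁻¹' A ∩ Y ⁻¹' T) | MeasurableSpace.comap Z inferInstance⟧)
        =ᵐ[μ] μ⟦X' ⁻¹' A ∩ (X ⁻¹' B ∩ Y ⁻¹' T) | MeasurableSpace.comap Z inferInstance⟧ := by
      refine (factor A B T hA hB hT).trans (Filter.EventuallyEq.trans ?_
        (factor B A T hB hA hT).symm)
      filter_upwards [hswap A hA, hswap B hB] with ω h1 h2
      rw [← h1, ← h2]; ring
    have htoReal : (μ (Z ⁻¹' S ∩ (X' ⁻¹' B ∩ (X ⁻¹' A ∩ Y ⁻¹' T)))).toReal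
        = (μ (Z ⁻¹' S ∩ (X' ⁻¹' A ∩ (X ⁻¹' B ∩ Y ⁻¹' T)))).toReal := by
      rw [meascalc _ hW1, meascalc _ hW2]
      exact integral_congr_ae (ae_restrict_of_ae hcond)
    exact (ENNReal.toReal_eq_toReal_iff' (measure_ne_top μ _) (measure_ne_top μ _)).mp htoReal
  -- equality of joint laws
  have hmap : μ.map (fun ω => ((Z ω, Y ω), (X ω, X' ω)))
      = μ.map (fun ω => ((Z ω, Y ω), (X' ω, X ω))) := by
    have hm1 : Measurable (fun ω => ((Z ω, Y ω), (X ω, X' ω))) :=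
      (hZ.prodMk hY).prodMk (hX.prodMk hX')
    have hm2 : Measurable (fun ω => ((Z ω, Y ω), (X' ω, X ω))) :=
      (hZ.prodMk hY).prodMk (hX'.prodMk hX)
    haveI : IsProbabilityMeasure (μ.map (fun ω => ((Z ω, Y ω), (X ω, X' ω)))) :=
      Measure.isProbabilityMeasure_map hm1.aemeasurable
    haveI : IsProbabilityMeasure (μ.map (fun ω => ((Z ω, Y ω), (X' ω, X ω)))) :=
      Measure.isProbabilityMeasure_map hm2.aemeasurable
    refine ext_of_generate_finite _
      (generateFrom_eq_prod generateFrom_prod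
        generateFrom_prod
        (isCountablySpanning_measurableSet.prod isCountablySpanning_measurableSet)
        (isCountablySpanning_measurableSet.prod isCountablySpanning_measurableSet)).symm
      (isPiSystem_prod.prod isPiSystem_prod) ?_ ?_
    · rintro _ ⟨_, ⟨S, hS, T, hT, rfl⟩, _, ⟨A, hA, B, hB, rfl⟩, rfl⟩
      rw [Measure.map_apply hm1 (((hS.prod hT).prod (hA.prod hB))),
        Measure.map_apply hm2 (((hS.prod hT).prod (hA.prod hB)))]
      have hp1 : (fun ω => ((Z ω, Y ω), (X ω, X' ω))) ⁻¹' ((S ×ˢ T) ×ˢ (A ×ˢ B))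
          = (Z ⁻¹' S ∩ Y ⁻¹' T) ∩ (X ⁻¹' A ∩ X' ⁻¹' B) := by
        ext ω; simp [Set.mem_prod]
      have hp2 : (fun ω => ((Z ω, Y ω), (X' ω, X ω))) ⁻¹' ((S ×ˢ T) ×ˢ (A ×ˢ B))
          = (Z ⁻¹' S ∩ Y ⁻¹' T) ∩ (X' ⁻¹' A ∩ X ⁻¹' B) := by
        ext ω; simp [Set.mem_prod]
      rw [hp1, hp2]
      exact key S T A B hS hT hA hB
    · simp
  have hcd : condDistrib (fun ω => (X ω, X' ω)) (fun ω => (Z ω, Y ω)) μ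
      = condDistrib (fun ω => (X' ω, X ω)) (fun ω => (Z ω, Y ω)) μ := by
    rw [condDistrib_def, condDistrib_def]
    congr 1
  filter_upwards with w
  rw [hcd]
end

section
/- Let (X, Y, Z) satisfy the null hypothesis X ⊥ Y | Z, and let X^{(1)}, ..., X^{(M)} be i.i.d. draws from the true conditional distribution of X given Z, drawn independently of (X, Y) given Z. Then for any measurable test statistic T, the p-value p = (1 + #{m : T(Y, X^{(m)}, Z) ≥ T(Y, X, Z)})/(M+1) satisfies P(p ≤ α) ≤ α for all α ∈ [0,1]. -/
open MeasureTheory ProbabilityTheory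
open scoped ENNReal

section CRTAux

variable {Ω 𝓧 β γ : Type*} [MeasurableSpace Ω] [MeasurableSpace 𝓧]
    [MeasurableSpace β] [MeasurableSpace γ]

/-- Combinatorial core: at most `k` indices can have rank at most `k`. -/
lemma crt_card_low_rank {n k : ℕ} (t : Fin n → ℝ) :
    (Finset.univ.filter fun i => (Finset.univ.filter fun m => t i ≤ t m).card ≤ k).card ≤ k := by
  classical
  set S := Finset.univ.filter fun i => (Finset.univ.filter fun m => t i ≤ t m).card ≤ k with hS
  rcases S.eq_empty_or_nonempty with h | h
  · simp [h]
  · obtain ⟨j, hj, hmin⟩ := S.exists_min_image t h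
    have hsub : S ⊆ Finset.univ.filter fun m => t j ≤ t m := by
      intro i hi
      exact Finset.mem_filter.2 ⟨Finset.mem_univ _, hmin i hi⟩
    calc S.card ≤ (Finset.univ.filter fun m => t j ≤ t m).card := Finset.card_le_card hsub
      _ ≤ k := (Finset.mem_filter.1 hj).2

lemma crt_card_perm {n : ℕ} (τ : Equiv.Perm (Fin n)) (Q : Fin n → Prop) [DecidablePred Q] :
    (Finset.univ.filter fun m => Q (τ m)).card = (Finset.univ.filter Q).card := by
  apply Finset.card_bij (fun m _ => τ m)
  · intro a ha
    simp only [Finset.mem_filter, Finset.mem_univ, true_and] at ha ⊢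
    exact ha
  · intro a _ b _ h
    exact τ.injective h
  · intro b hb
    refine ⟨τ.symm b, ?_, by simp⟩
    simp only [Finset.mem_filter, Finset.mem_univ, true_and] at hb ⊢
    simpa using hb

/-- Product formula for conditionally i.i.d. coordinates. -/
lemma crt_prod_formula [StandardBorelSpace Ω] [Nonempty Ω]
    (μ : Measure Ω) [IsProbabilityMeasure μ]
    {n : ℕ} (Xs : Fin n → Ω → 𝓧) (W : Ω → β × γ)
    (hXs : ∀ i, Measurable (Xs i)) (hW : Measurable W)
    (hci : iCondIndepFun (MeasurableSpace.comap W inferInstance)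
      hW.comap_le Xs μ)
    (κ : ProbabilityTheory.Kernel (β × γ) 𝓧)
    (hcond : ∀ i (A : Set 𝓧), MeasurableSet A →
      (μ⟦Xs i ⁻¹' A | MeasurableSpace.comap W inferInstance⟧)
        =ᵐ[μ] fun ω => (κ (W ω) A).toReal)
    (A : Fin n → Set 𝓧) (hA : ∀ i, MeasurableSet (A i))
    (t : Set (β × γ)) (ht : MeasurableSet t) :
    (μ ((⋂ i, Xs i ⁻¹' A i) ∩ W ⁻¹' t)).toReal
        = ∫ ω in W ⁻¹' t, ∏ i, (κ (W ω) (A i)).toReal ∂μ := by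
  classical
  have hEmeas : MeasurableSet (⋂ i, Xs i ⁻¹' A i) :=
    MeasurableSet.iInter fun i => (hXs i) (hA i)
  have hs : MeasurableSet[MeasurableSpace.comap W inferInstance] (W ⁻¹' t) := ⟨t, ht, rfl⟩
  have hprodae : (μ⟦(⋂ i, Xs i ⁻¹' A i) | MeasurableSpace.comap W inferInstance⟧)
      =ᵐ[μ] fun ω => ∏ i, (κ (W ω) (A i)).toReal := by
    have h := (iCondIndepFun_iff_condExp_inter_preimage_eq_mul
        (m' := MeasurableSpace.comap W inferInstance) (hm' := hW.comap_le)
        (μ := μ) _ _ hXs).1 hci Finset.univ (sets := A) (fun i _ => hA i)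
    have h2 : ∀ᵐ ω ∂μ, ∀ i, (μ⟦Xs i ⁻¹' A i | MeasurableSpace.comap W inferInstance⟧) ω
        = (κ (W ω) (A i)).toReal := ae_all_iff.2 fun i => hcond i (A i) (hA i)
    have h3 : (⋂ i, Xs i ⁻¹' A i) = ⋂ i ∈ Finset.univ, Xs i ⁻¹' A i := by simp
    rw [h3]
    filter_upwards [h, h2] with ω hω h2ω
    rw [hω, Finset.prod_apply]
    exact Finset.prod_congr rfl fun i _ => h2ω i
  have hind : Integrable ((⋂ i, Xs i ⁻¹' A i).indicator fun _ => (1:ℝ)) μ :=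
    (integrable_const 1).indicator hEmeas
  have e1 : ∫ ω in W ⁻¹' t,
      (μ⟦(⋂ i, Xs i ⁻¹' A i) | MeasurableSpace.comap W inferInstance⟧) ω ∂μ
      = (μ ((⋂ i, Xs i ⁻¹' A i) ∩ W ⁻¹' t)).toReal := by
    rw [setIntegral_condExp hW.comap_le hind hs, setIntegral_indicator hEmeas]
    rw [setIntegral_const, smul_eq_mul, mul_one, Set.inter_comm, measureReal_def]
  rw [← e1]
  exact integral_congr_ae (ae_restrict_of_ae hprodae)

/-- Exchangeability of the joint law under permutations of the coordinates. -/
lemma crt_map_perm (μ : Measure Ω) [IsProbabilityMeasure μ]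
    {n : ℕ} (Xs : Fin n → Ω → 𝓧) (W : Ω → β × γ)
    (hXs : ∀ i, Measurable (Xs i)) (hW : Measurable W)
    (κ : ProbabilityTheory.Kernel (β × γ) 𝓧)
    (hprod : ∀ (A : Fin n → Set 𝓧), (∀ i, MeasurableSet (A i)) →
      ∀ (t : Set (β × γ)), MeasurableSet t →
      (μ ((⋂ i, Xs i ⁻¹' A i) ∩ W ⁻¹' t)).toReal
        = ∫ ω in W ⁻¹' t, ∏ i, (κ (W ω) (A i)).toReal ∂μ)
    (σ : Equiv.Perm (Fin n)) :
    μ.map (fun ω => ((fun i => Xs (σ i) ω), W ω))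
      = μ.map (fun ω => ((fun i => Xs i ω), W ω)) := by
  classical
  have hΦ : ∀ τ : Equiv.Perm (Fin n), Measurable (fun ω => ((fun i => Xs (τ i) ω), W ω)) :=
    fun τ => (measurable_pi_lambda _ fun i => hXs (τ i)).prodMk hW
  have hpre : ∀ (τ : Equiv.Perm (Fin n)) (A : Fin n → Set 𝓧) (t : Set (β × γ)),
      (fun ω => ((fun i => Xs (τ i) ω), W ω)) ⁻¹' (Set.pi Set.univ A ×ˢ t)
        = (⋂ i, Xs (τ i) ⁻¹' A i) ∩ W ⁻¹' t := by
    intro τ A t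
    ext ω
    simp [Set.mem_pi]
  have hmeasbox : ∀ (A : Fin n → Set 𝓧), (∀ i, MeasurableSet (A i)) → ∀ (t : Set (β × γ)),
      MeasurableSet t → MeasurableSet (Set.pi Set.univ A ×ˢ t) := by
    intro A hA t ht
    exact (MeasurableSet.pi Set.countable_univ (fun i _ => hA i)).prod ht
  have h1 : IsProbabilityMeasure (μ.map (fun ω => ((fun i => Xs (σ i) ω), W ω))) :=
    Measure.isProbabilityMeasure_map (hΦ σ).aemeasurable
  have h2 : IsProbabilityMeasure (μ.map (fun ω => ((fun i => Xs i ω), W ω))) :=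
    Measure.isProbabilityMeasure_map ((measurable_pi_lambda _ fun i => hXs i).prodMk hW).aemeasurable
  refine ext_of_generate_finite _
    (generateFrom_eq_prod generateFrom_pi MeasurableSpace.generateFrom_measurableSet
      (IsCountablySpanning.pi fun i => isCountablySpanning_measurableSet)
      isCountablySpanning_measurableSet).symm
    (isPiSystem_pi.prod MeasurableSpace.isPiSystem_measurableSet) ?_ (by simp)
  rintro - ⟨-, ⟨A, hA, rfl⟩, t, ht, rfl⟩
  have hA' : ∀ i, MeasurableSet (A i) := fun i => hA i (Set.mem_univ i)
  have htm : MeasurableSet t := ht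
  rw [Measure.map_apply (hΦ σ) (hmeasbox A hA' t htm),
      Measure.map_apply ((measurable_pi_lambda _ fun i => hXs i).prodMk hW)
        (hmeasbox A hA' t htm), hpre]
  have hpre1 : (fun ω => ((fun i => Xs i ω), W ω)) ⁻¹' (Set.pi Set.univ A ×ˢ t)
      = (⋂ i, Xs i ⁻¹' A i) ∩ W ⁻¹' t := by
    ext ω; simp [Set.mem_pi]
  rw [hpre1]
  have hre : (⋂ i, Xs (σ i) ⁻¹' A i) = ⋂ j, Xs j ⁻¹' A (σ.symm j) := by
    rw [← σ.surjective.iInter_comp (g := fun j => Xs j ⁻¹' A (σ.symm j))]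
    simp
  rw [hre]
  have e1 := hprod (fun j => A (σ.symm j)) (fun j => hA' _) t htm
  have e2 := hprod A hA' t htm
  have eprod : ∀ ω, (∏ j, (κ (W ω) (A (σ.symm j))).toReal)
      = ∏ i, (κ (W ω) (A i)).toReal := fun ω =>
    σ.symm.prod_comp fun i => (κ (W ω) (A i)).toReal
  rw [← ENNReal.toReal_eq_toReal_iff' (measure_ne_top μ _) (measure_ne_top μ _)]
  rw [e1, e2]
  exact integral_congr_ae (Filter.Eventually.of_forall fun ω => eprod ω)

end CRTAux

/-- Exact validity of the model-X CRT: under `X ⊥ Y ∣ Z`, if `X⁽¹⁾, …, X⁽ᴹ⁾` are,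
conditionally on `(Y,Z)`, i.i.d. copies of `X` (all with the conditional law of `X`),
then the CRT p-value is valid. Here `Xs 0` is the observed `X` and `Xs m`, `m ≠ 0`,
are the resamples. -/
theorem stmt11 {Ω 𝓧 β γ : Type*} [MeasurableSpace Ω] [StandardBorelSpace Ω] [Nonempty Ω]
    [MeasurableSpace 𝓧] [StandardBorelSpace 𝓧] [Nonempty 𝓧]
    [MeasurableSpace β] [MeasurableSpace γ]
    (μ : Measure Ω) [IsProbabilityMeasure μ]
    (M : ℕ) (Xs : Fin (M + 1) → Ω → 𝓧) (Y : Ω → β) (Z : Ω → γ)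
    (hXs : ∀ i, Measurable (Xs i)) (hY : Measurable Y) (hZ : Measurable Z)
    (hnull : CondIndepFun (MeasurableSpace.comap Z inferInstance) hZ.comap_le (Xs 0) Y μ)
    (hci : iCondIndepFun (MeasurableSpace.comap (fun ω => (Y ω, Z ω)) inferInstance)
      ((hY.prodMk hZ).comap_le) Xs μ)
    (hid : ∀ i, ∀ᵐ w ∂(μ.map fun ω => (Y ω, Z ω)),
      condDistrib (Xs i) (fun ω => (Y ω, Z ω)) μ w
        = condDistrib (Xs 0) (fun ω => (Y ω, Z ω)) μ w)
    (T : β → 𝓧 → γ → ℝ) (hT : Measurable fun p : β × 𝓧 × γ => T p.1 p.2.1 p.2.2) :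
    ∀ α : ℝ, α ∈ Set.Icc (0:ℝ) 1 →
      (μ {ω | ((1 : ℝ) + (Finset.univ.filter (fun m : Fin (M + 1) =>
          m ≠ 0 ∧ T (Y ω) (Xs 0 ω) (Z ω) ≤ T (Y ω) (Xs m ω) (Z ω))).card) / (M + 1)
        ≤ α}).toReal ≤ α := by
  classical
  intro α hα
  set W : Ω → β × γ := fun ω => (Y ω, Z ω) with hWdef
  have hW : Measurable W := hY.prodMk hZ
  set κ : ProbabilityTheory.Kernel (β × γ) 𝓧 := condDistrib (Xs 0) W μ with hκdef
  set k : ℕ := ⌊α * (M + 1)⌋₊ with hkdef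
  -- conditional expectation of each coordinate is given by κ
  have hcond : ∀ i (A : Set 𝓧), MeasurableSet A →
      (μ⟦Xs i ⁻¹' A | MeasurableSpace.comap W inferInstance⟧)
        =ᵐ[μ] fun ω => (κ (W ω) A).toReal := by
    intro i A hA
    have h1 := condDistrib_ae_eq_condExp (μ := μ) hW (hXs i) hA
    have h2 : ∀ᵐ ω ∂μ, condDistrib (Xs i) W μ (W ω) = κ (W ω) :=
      ae_of_ae_map hW.aemeasurable (hid i)
    filter_upwards [h1, h2] with ω h1ω h2ω
    rw [← h1ω, h2ω, measureReal_def]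
  have hprod := crt_prod_formula μ Xs W hXs hW hci κ hcond
  have hmap := crt_map_perm μ Xs W hXs hW κ hprod
  -- the events
  set E : Fin (M + 1) → Set Ω := fun i => {ω |
      (Finset.univ.filter fun m => T (Y ω) (Xs i ω) (Z ω) ≤ T (Y ω) (Xs m ω) (Z ω)).card ≤ k}
    with hEdef
  -- measurability
  have hTm : ∀ i m : Fin (M + 1),
      MeasurableSet {ω | T (Y ω) (Xs i ω) (Z ω) ≤ T (Y ω) (Xs m ω) (Z ω)} := fun i m =>
    measurableSet_le (hT.comp (hY.prodMk ((hXs i).prodMk hZ)))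
      (hT.comp (hY.prodMk ((hXs m).prodMk hZ)))
  have hcardmeas : ∀ i, Measurable fun ω =>
      (Finset.univ.filter fun m => T (Y ω) (Xs i ω) (Z ω) ≤ T (Y ω) (Xs m ω) (Z ω)).card := by
    intro i
    have heq : (fun ω => (Finset.univ.filter fun m =>
        T (Y ω) (Xs i ω) (Z ω) ≤ T (Y ω) (Xs m ω) (Z ω)).card)
        = fun ω => ∑ m : Fin (M + 1),
            if T (Y ω) (Xs i ω) (Z ω) ≤ T (Y ω) (Xs m ω) (Z ω) then 1 else 0 := by
      funext ω; rw [Finset.card_filter]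
    rw [heq]
    exact Finset.measurable_sum _ fun m _ =>
      Measurable.ite (hTm i m) measurable_const measurable_const
  have hEmeas : ∀ i, MeasurableSet (E i) := fun i => (hcardmeas i) measurableSet_Iic
  -- the target set in the function space
  set G : Set ((Fin (M + 1) → 𝓧) × (β × γ)) := {p |
      (Finset.univ.filter fun m => T p.2.1 (p.1 0) p.2.2 ≤ T p.2.1 (p.1 m) p.2.2).card ≤ k}
    with hGdef
  have hGmeas : MeasurableSet G := by
    have hmeas : ∀ j : Fin (M + 1),
        Measurable fun p : (Fin (M + 1) → 𝓧) × (β × γ) => T p.2.1 (p.1 j) p.2.2 := by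
      intro j
      have hco : Measurable fun p : (Fin (M + 1) → 𝓧) × (β × γ) =>
          (p.2.1, (p.1 j, p.2.2)) :=
        (measurable_snd.fst).prodMk ((measurable_fst.eval).prodMk measurable_snd.snd)
      exact hT.comp hco
    have heq : (fun p : (Fin (M + 1) → 𝓧) × (β × γ) =>
        (Finset.univ.filter fun m => T p.2.1 (p.1 0) p.2.2 ≤ T p.2.1 (p.1 m) p.2.2).card)
        = fun p => ∑ m : Fin (M + 1),
            if T p.2.1 (p.1 0) p.2.2 ≤ T p.2.1 (p.1 m) p.2.2 then 1 else 0 := by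
      funext p; rw [Finset.card_filter]
    have : Measurable fun p : (Fin (M + 1) → 𝓧) × (β × γ) =>
        (Finset.univ.filter fun m => T p.2.1 (p.1 0) p.2.2 ≤ T p.2.1 (p.1 m) p.2.2).card := by
      rw [heq]
      exact Finset.measurable_sum _ fun m _ =>
        Measurable.ite (measurableSet_le (hmeas 0) (hmeas m)) measurable_const measurable_const
    exact this measurableSet_Iic
  -- each E i is a preimage of G under the permuted vector map
  have hΦ : ∀ τ : Equiv.Perm (Fin (M + 1)),
      Measurable (fun ω => ((fun j => Xs (τ j) ω), W ω)) :=
    fun τ => (measurable_pi_lambda _ fun j => hXs (τ j)).prodMk hW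
  have hEG : ∀ i, E i = (fun ω => ((fun j => Xs ((Equiv.swap 0 i) j) ω), W ω)) ⁻¹' G := by
    intro i
    ext ω
    simp only [hEdef, hGdef, Set.mem_preimage, Set.mem_setOf_eq, hWdef]
    have hcards : (Finset.univ.filter fun m => T (Y ω) (Xs ((Equiv.swap 0 i) 0) ω) (Z ω)
          ≤ T (Y ω) (Xs ((Equiv.swap 0 i) m) ω) (Z ω)).card
        = (Finset.univ.filter fun m =>
            T (Y ω) (Xs i ω) (Z ω) ≤ T (Y ω) (Xs m ω) (Z ω)).card := by
      simp only [Equiv.swap_apply_left]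
      exact crt_card_perm (Equiv.swap 0 i)
        (fun m => T (Y ω) (Xs i ω) (Z ω) ≤ T (Y ω) (Xs m ω) (Z ω))
    rw [hcards]
  have hEeq : ∀ i, μ (E i) = μ (E 0) := by
    intro i
    rw [hEG i, hEG 0]
    rw [← Measure.map_apply (hΦ (Equiv.swap 0 i)) hGmeas,
        ← Measure.map_apply (hΦ (Equiv.swap 0 0)) hGmeas,
        hmap (Equiv.swap 0 i), hmap (Equiv.swap 0 0)]
  -- the sum bound
  have hsum : (∑ i : Fin (M + 1), μ (E i)) ≤ (k : ℝ≥0∞) := by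
    have hle : ∀ ω, (∑ i : Fin (M + 1), Set.indicator (E i) (fun _ => (1:ℝ≥0∞)) ω)
        ≤ (k : ℝ≥0∞) := by
      intro ω
      have h1 : ∑ i : Fin (M + 1), Set.indicator (E i) (fun _ => (1:ℝ≥0∞)) ω
          = ((Finset.univ.filter fun i : Fin (M + 1) => ω ∈ E i).card : ℝ≥0∞) := by
        rw [Finset.card_filter]
        push_cast
        refine Finset.sum_congr rfl fun i _ => ?_
        by_cases h : ω ∈ E i <;> simp [Set.indicator, h]
      rw [h1]
      have h2 := crt_card_low_rank (k := k) (fun m => T (Y ω) (Xs m ω) (Z ω))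
      exact_mod_cast Nat.cast_le.2 h2
    calc (∑ i : Fin (M + 1), μ (E i))
        = ∑ i : Fin (M + 1), ∫⁻ ω, Set.indicator (E i) (fun _ => (1:ℝ≥0∞)) ω ∂μ := by
          refine Finset.sum_congr rfl fun i _ => ?_
          rw [lintegral_indicator (hEmeas i), setLIntegral_one]
      _ = ∫⁻ ω, ∑ i : Fin (M + 1), Set.indicator (E i) (fun _ => (1:ℝ≥0∞)) ω ∂μ :=
          (lintegral_finset_sum _ fun i _ => (measurable_const.indicator (hEmeas i))).symm
      _ ≤ ∫⁻ ω, (k : ℝ≥0∞) ∂μ := lintegral_mono hle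
      _ = (k : ℝ≥0∞) := by simp
  have hsum' : ((M : ℝ≥0∞) + 1) * μ (E 0) ≤ (k : ℝ≥0∞) := by
    have : (∑ i : Fin (M + 1), μ (E i)) = ((M : ℝ≥0∞) + 1) * μ (E 0) := by
      rw [Finset.sum_congr rfl fun i _ => hEeq i, Finset.sum_const, Finset.card_univ,
        Fintype.card_fin, nsmul_eq_mul]
      push_cast
      ring
    rw [← this]
    exact hsum
  -- identify the p-value event with E 0
  have hα0 : (0:ℝ) ≤ α := hα.1
  have hMpos : (0:ℝ) < (M:ℝ) + 1 := by positivity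
  have hset : {ω | ((1 : ℝ) + (Finset.univ.filter (fun m : Fin (M + 1) =>
      m ≠ 0 ∧ T (Y ω) (Xs 0 ω) (Z ω) ≤ T (Y ω) (Xs m ω) (Z ω))).card) / (M + 1) ≤ α}
      = E 0 := by
    ext ω
    have hc : (Finset.univ.filter fun m : Fin (M + 1) =>
        T (Y ω) (Xs 0 ω) (Z ω) ≤ T (Y ω) (Xs m ω) (Z ω)).card
        = (Finset.univ.filter (fun m : Fin (M + 1) =>
          m ≠ 0 ∧ T (Y ω) (Xs 0 ω) (Z ω) ≤ T (Y ω) (Xs m ω) (Z ω))).card + 1 := by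
      have hins : (Finset.univ.filter fun m : Fin (M + 1) =>
          T (Y ω) (Xs 0 ω) (Z ω) ≤ T (Y ω) (Xs m ω) (Z ω))
          = insert 0 (Finset.univ.filter (fun m : Fin (M + 1) =>
            m ≠ 0 ∧ T (Y ω) (Xs 0 ω) (Z ω) ≤ T (Y ω) (Xs m ω) (Z ω))) := by
        ext m
        simp only [Finset.mem_insert, Finset.mem_filter, Finset.mem_univ, true_and]
        by_cases hm : m = 0
        · subst hm; simp
        · simp [hm]
      rw [hins, Finset.card_insert_of_notMem (by simp)]
    simp only [Set.mem_setOf_eq, hEdef, hc]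
    set c : ℕ := (Finset.univ.filter (fun m : Fin (M + 1) =>
      m ≠ 0 ∧ T (Y ω) (Xs 0 ω) (Z ω) ≤ T (Y ω) (Xs m ω) (Z ω))).card with hcdef
    rw [div_le_iff₀ hMpos, hkdef, Nat.le_floor_iff (by positivity)]
    push_cast
    constructor <;> intro h <;> linarith
  rw [hset]
  -- conclude
  have hdiv : μ (E 0) ≤ (k : ℝ≥0∞) / ((M : ℝ≥0∞) + 1) := by
    rw [ENNReal.le_div_iff_mul_le (by simp) (by simp)]
    rw [mul_comm]
    exact hsum'
  have hne : (k : ℝ≥0∞) / ((M : ℝ≥0∞) + 1) ≠ ⊤ := by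
    exact (ENNReal.div_lt_top (by simp) (by simp)).ne
  have h2 : (μ (E 0)).toReal ≤ ((k : ℝ≥0∞) / ((M : ℝ≥0∞) + 1)).toReal :=
    ENNReal.toReal_mono hne hdiv
  have h3 : ((k : ℝ≥0∞) / ((M : ℝ≥0∞) + 1)).toReal = (k : ℝ) / ((M : ℝ) + 1) := by
    rw [ENNReal.toReal_div, ENNReal.toReal_add (by simp) (by simp)]
    simp
  have h4 : (k : ℝ) / ((M : ℝ) + 1) ≤ α := by
    rw [div_le_iff₀ hMpos]
    calc (k : ℝ) ≤ α * (M + 1) := Nat.floor_le (by positivity)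
      _ = α * ((M:ℝ) + 1) := by push_cast; ring
  calc (μ (E 0)).toReal ≤ ((k : ℝ≥0∞) / ((M : ℝ≥0∞) + 1)).toReal := h2
    _ = (k : ℝ) / ((M : ℝ) + 1) := h3
    _ ≤ α := h4
end
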